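/- arXiv:1508.03754 — 6 statements merged into one kernel-verified Lean document; each statement's English description precedes it below -/
import Mathlib

section
/- Let M be a positive semi-definite block matrix M = [[A, X], [X*, B]] with A an n×n positive semi-definite matrix and B an m×m positive semi-definite matrix. Then there exist unitary matrices U, V of size (n+m)×(n+m) such that M = U (A ⊕ 0) U* + V (0 ⊕ B) V*. -/
open Matrix ComplexOrder

section Aux

variable {ι : Type*} [Fintype ι] [DecidableEq ι]

lemma map_univ_comp_equiv {α β γ : Type*} [Fintype α] [Fintype β] [DecidableEq α] [DecidableEq β]
    (e : α ≃ β) (u : β → γ) :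
    Finset.univ.val.map (u ∘ e) = Finset.univ.val.map u := by
  conv_rhs => rw [← Finset.univ_map_equiv_to_embedding e]
  rw [Finset.map_val, Multiset.map_map]
  rfl

lemma exists_perm_comp_eq {f g : ι → ℝ}
    (h : Finset.univ.val.map f = Finset.univ.val.map g) : ∃ σ : Equiv.Perm ι, f = g ∘ σ := by
  let e := Fintype.equivFin ι
  set f' : Fin _ → ℝ := f ∘ e.symm with hf'
  set g' : Fin _ → ℝ := g ∘ e.symm with hg'
  have hs : f' ∘ Tuple.sort f' = g' ∘ Tuple.sort g' := by
    apply List.ofFn_injective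
    have p : (List.ofFn (f' ∘ Tuple.sort f')).Perm (List.ofFn (g' ∘ Tuple.sort g')) := by
      rw [← Multiset.coe_eq_coe, ← Fin.univ_val_map, ← Fin.univ_val_map,
        map_univ_comp_equiv (Tuple.sort f') f', map_univ_comp_equiv (Tuple.sort g') g',
        hf', hg', map_univ_comp_equiv e.symm f, map_univ_comp_equiv e.symm g, h]
    exact List.Perm.eq_of_sortedLE
      ((Tuple.monotone_sort f').sortedLE_ofFn) ((Tuple.monotone_sort g').sortedLE_ofFn) p
  refine ⟨e.trans ((Tuple.sort f')⁻¹.trans ((Tuple.sort g').trans e.symm)), ?_⟩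
  funext x
  have := congrFun hs ((Tuple.sort f')⁻¹ (e x))
  simp only [Function.comp_apply, Equiv.Perm.inv_def, Equiv.apply_symm_apply] at this
  simpa [f', g', e] using this

/-- det of `t • 1 - H` for a hermitian matrix, via eigenvalues. -/
lemma det_smul_one_sub_hermitian {H : Matrix ι ι ℂ} (hH : H.IsHermitian) (t : ℂ) :
    det (t • (1 : Matrix ι ι ℂ) - H) = ∏ i, (t - (hH.eigenvalues i : ℂ)) := by
  conv_lhs => rw [hH.spectral_theorem, Unitary.conjStarAlgAut_apply]
  have hU : (hH.eigenvectorUnitary : Matrix ι ι ℂ) * star (hH.eigenvectorUnitary : Matrix ι ι ℂ)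
      = 1 := Matrix.mem_unitaryGroup_iff.mp hH.eigenvectorUnitary.2
  have key : t • (1 : Matrix ι ι ℂ)
      - (hH.eigenvectorUnitary : Matrix ι ι ℂ) * diagonal (RCLike.ofReal ∘ hH.eigenvalues) *
        (star (hH.eigenvectorUnitary : Matrix ι ι ℂ))
      = (hH.eigenvectorUnitary : Matrix ι ι ℂ) *
          (t • (1 : Matrix ι ι ℂ) - diagonal (RCLike.ofReal ∘ hH.eigenvalues)) *
          (star (hH.eigenvectorUnitary : Matrix ι ι ℂ)) := by
    rw [Matrix.mul_sub, Matrix.sub_mul]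
    congr 1
    rw [Matrix.mul_smul, Matrix.mul_one, Matrix.smul_mul, hU]
  have hU' : star (hH.eigenvectorUnitary : Matrix ι ι ℂ) * (hH.eigenvectorUnitary : Matrix ι ι ℂ)
      = 1 := Matrix.mem_unitaryGroup_iff'.mp hH.eigenvectorUnitary.2
  rw [key, det_mul, det_mul, mul_comm, ← mul_assoc, ← det_mul, hU']
  have : t • (1 : Matrix ι ι ℂ) - diagonal (RCLike.ofReal ∘ hH.eigenvalues)
      = diagonal (fun i => t - (hH.eigenvalues i : ℂ)) := by
    rw [smul_eq_diagonal_mul, Matrix.mul_one, diagonal_sub]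
    rfl
  rw [this, det_one, one_mul, det_diagonal]

lemma eigs_multiset_eq_of_det {H₁ H₂ : Matrix ι ι ℂ} (h₁ : H₁.IsHermitian) (h₂ : H₂.IsHermitian)
    (hdet : ∀ t : ℂ, det (t • (1 : Matrix ι ι ℂ) - H₁) = det (t • (1 : Matrix ι ι ℂ) - H₂)) :
    Finset.univ.val.map h₁.eigenvalues = Finset.univ.val.map h₂.eigenvalues := by
  have hpoly : (∏ i : ι, (Polynomial.X - Polynomial.C ((h₁.eigenvalues i : ℂ))))
      = ∏ i : ι, (Polynomial.X - Polynomial.C ((h₂.eigenvalues i : ℂ))) := by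
    apply Polynomial.funext
    intro t
    simp only [Polynomial.eval_prod, Polynomial.eval_sub, Polynomial.eval_X, Polynomial.eval_C]
    rw [← det_smul_one_sub_hermitian h₁ t, ← det_smul_one_sub_hermitian h₂ t, hdet]
  have roots_eq : ∀ (d : ι → ℝ),
      (∏ i : ι, (Polynomial.X - Polynomial.C ((d i : ℂ)))).roots
        = Finset.univ.val.map (fun i => ((d i : ℂ))) := by
    intro d
    rw [Finset.prod_eq_multiset_prod]
    have : Multiset.map (fun i => Polynomial.X - Polynomial.C ((d i : ℂ))) Finset.univ.val
        = Multiset.map (fun a => Polynomial.X - Polynomial.C a)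
          (Finset.univ.val.map fun i => ((d i : ℂ))) := by
      rw [Multiset.map_map]; rfl
    rw [this]
    exact Polynomial.roots_multiset_prod_X_sub_C _
  have := (roots_eq h₁.eigenvalues).symm.trans (hpoly ▸ roots_eq h₂.eigenvalues)
  have hinj : Function.Injective ((↑) : ℝ → ℂ) := Complex.ofReal_injective
  apply Multiset.map_injective hinj
  simpa [Multiset.map_map, Function.comp] using this

lemma perm_unitary_mem (σ : Equiv.Perm ι) :
    (1 : Matrix ι ι ℂ).submatrix σ (Equiv.refl ι) ∈ Matrix.unitaryGroup ι ℂ := by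
  rw [Matrix.mem_unitaryGroup_iff]
  have : star ((1 : Matrix ι ι ℂ).submatrix σ (Equiv.refl ι))
      = (1 : Matrix ι ι ℂ).submatrix (Equiv.refl ι) σ := by
    rw [Matrix.star_eq_conjTranspose, Matrix.conjTranspose_submatrix, Matrix.conjTranspose_one]
  rw [this, Matrix.submatrix_mul_equiv (e₂ := Equiv.refl ι), Matrix.one_mul,
    Matrix.submatrix_one_equiv]

lemma perm_conj_diagonal (σ : Equiv.Perm ι) (d : ι → ℂ) :
    diagonal (d ∘ σ) = (1 : Matrix ι ι ℂ).submatrix σ (Equiv.refl ι) * diagonal d *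
      ((1 : Matrix ι ι ℂ).submatrix σ (Equiv.refl ι))ᴴ := by
  rw [Matrix.conjTranspose_submatrix, Matrix.conjTranspose_one]
  have h1 : (1 : Matrix ι ι ℂ).submatrix σ (Equiv.refl ι) * diagonal d
      = ((1 : Matrix ι ι ℂ) * diagonal d).submatrix σ id := by
    have : diagonal d = (diagonal d).submatrix (Equiv.refl ι) id := by simp
    conv_lhs => rw [this]
    rw [Matrix.submatrix_mul_equiv]
  have h2 : ((1 : Matrix ι ι ℂ) * diagonal d).submatrix σ id * (1 : Matrix ι ι ℂ).submatrix
      (Equiv.refl ι) σ = (((1 : Matrix ι ι ℂ) * diagonal d) * 1).submatrix σ σ := by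
    have : ((1 : Matrix ι ι ℂ) * diagonal d).submatrix σ id
        = ((1 : Matrix ι ι ℂ) * diagonal d).submatrix σ (Equiv.refl ι) := rfl
    rw [this, Matrix.submatrix_mul_equiv]
  rw [h1, h2, Matrix.one_mul, Matrix.mul_one, Matrix.submatrix_diagonal_equiv]

/-- Two hermitian matrices whose `t • 1 - ·` determinants agree are unitarily conjugate. -/
lemma unitary_conj_of_det_eq {H₁ H₂ : Matrix ι ι ℂ} (h₁ : H₁.IsHermitian) (h₂ : H₂.IsHermitian)
    (hdet : ∀ t : ℂ, det (t • (1 : Matrix ι ι ℂ) - H₁) = det (t • (1 : Matrix ι ι ℂ) - H₂)) :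
    ∃ U : Matrix.unitaryGroup ι ℂ, H₁ = (U : Matrix ι ι ℂ) * H₂ * (U : Matrix ι ι ℂ)ᴴ := by
  obtain ⟨σ, hσ⟩ := exists_perm_comp_eq (eigs_multiset_eq_of_det h₁ h₂ hdet)
  set P : Matrix ι ι ℂ := (1 : Matrix ι ι ℂ).submatrix σ (Equiv.refl ι) with hP
  have hPmem : P ∈ Matrix.unitaryGroup ι ℂ := perm_unitary_mem σ
  set U₁ := h₁.eigenvectorUnitary
  set U₂ := h₂.eigenvectorUnitary
  refine ⟨(U₁ : Matrix.unitaryGroup ι ℂ) * ⟨P, hPmem⟩ * (star U₂), ?_⟩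
  have hD : diagonal (RCLike.ofReal ∘ h₁.eigenvalues)
      = P * diagonal (RCLike.ofReal ∘ h₂.eigenvalues) * Pᴴ := by
    have : (RCLike.ofReal ∘ h₁.eigenvalues : ι → ℂ)
        = (RCLike.ofReal ∘ h₂.eigenvalues : ι → ℂ) ∘ σ := by
      funext i
      simp only [Function.comp_apply]
      exact congrArg _ (congrFun hσ i)
    rw [this]
    exact perm_conj_diagonal σ _
  have spec₂ : diagonal (RCLike.ofReal ∘ h₂.eigenvalues)
      = star (U₂ : Matrix ι ι ℂ) * H₂ * (U₂ : Matrix ι ι ℂ) := by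
    rw [← h₂.conjStarAlgAut_star_eigenvectorUnitary, Unitary.conjStarAlgAut_star_apply]
  calc H₁ = (U₁ : Matrix ι ι ℂ) * diagonal (RCLike.ofReal ∘ h₁.eigenvalues) *
      (star (U₁ : Matrix ι ι ℂ)) := h₁.spectral_theorem.trans (Unitary.conjStarAlgAut_apply _ _)
    _ = (U₁ : Matrix ι ι ℂ) * (P * (star (U₂ : Matrix ι ι ℂ) * H₂ * (U₂ : Matrix ι ι ℂ)) * Pᴴ) *
        (star (U₁ : Matrix ι ι ℂ)) := by rw [← spec₂, ← hD]
    _ = _ := by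
      simp only [Submonoid.coe_mul, Unitary.coe_star, conjTranspose_mul,
        conjTranspose_conjTranspose, Matrix.star_eq_conjTranspose]
      noncomm_ring

lemma det_smul_one_sub_mul_comm (S : Matrix ι ι ℂ) (t : ℂ) :
    det (t • (1 : Matrix ι ι ℂ) - S * Sᴴ) = det (t • (1 : Matrix ι ι ℂ) - Sᴴ * S) := by
  rcases eq_or_ne t 0 with rfl | ht
  · simp [Matrix.det_neg, Matrix.det_mul, mul_comm]
  · have key : ∀ M N : Matrix ι ι ℂ, t • (1 : Matrix ι ι ℂ) - M * N
        = t • ((1 : Matrix ι ι ℂ) + ((-t⁻¹) • M) * N) := by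
      intro M N
      rw [smul_add, Matrix.smul_mul, smul_smul, mul_neg, mul_inv_cancel₀ ht]
      simp [sub_eq_add_neg, Matrix.neg_mul]
    rw [key, key, Matrix.det_smul, Matrix.det_smul, Matrix.det_one_add_mul_comm,
      Matrix.mul_smul, ← Matrix.smul_mul]

/-- `S * Sᴴ` is unitarily conjugate to `Sᴴ * S`. -/
lemma exists_unitary_mul_conjTranspose (S : Matrix ι ι ℂ) :
    ∃ U : Matrix.unitaryGroup ι ℂ,
      S * Sᴴ = (U : Matrix ι ι ℂ) * (Sᴴ * S) * (U : Matrix ι ι ℂ)ᴴ :=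
  unitary_conj_of_det_eq (isHermitian_mul_conjTranspose_self S)
    (isHermitian_conjTranspose_mul_self S) (det_smul_one_sub_mul_comm S)

end Aux

theorem decomposition_lemma (n m : ℕ)
    (A : Matrix (Fin n) (Fin n) ℂ) (B : Matrix (Fin m) (Fin m) ℂ)
    (X : Matrix (Fin n) (Fin m) ℂ)
    (hM : (fromBlocks A X Xᴴ B).PosSemidef)
    (hA : A.PosSemidef) (hB : B.PosSemidef) :
    ∃ U V : Matrix.unitaryGroup (Fin n ⊕ Fin m) ℂ,
      fromBlocks A X Xᴴ B =
        (U : Matrix (Fin n ⊕ Fin m) (Fin n ⊕ Fin m) ℂ) * fromBlocks A 0 0 0 * (U : Matrix _ _ ℂ)ᴴ +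
        (V : Matrix (Fin n ⊕ Fin m) (Fin n ⊕ Fin m) ℂ) * fromBlocks 0 0 0 B * (V : Matrix _ _ ℂ)ᴴ := by
  classical
  set M : Matrix (Fin n ⊕ Fin m) (Fin n ⊕ Fin m) ℂ := fromBlocks A X Xᴴ B with hMdef
  open scoped MatrixOrder in
  obtain ⟨T, hTherm, hTT⟩ : ∃ T : Matrix (Fin n ⊕ Fin m) (Fin n ⊕ Fin m) ℂ, Tᴴ = T ∧ T * T = M :=
    ⟨CFC.sqrt M, (CFC.sqrt_nonneg M).posSemidef.1, CFC.sqrt_mul_sqrt_self M hM.nonneg⟩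
  set E : Matrix (Fin n ⊕ Fin m) (Fin n ⊕ Fin m) ℂ := fromBlocks 1 0 0 0 with hE
  set F : Matrix (Fin n ⊕ Fin m) (Fin n ⊕ Fin m) ℂ := fromBlocks 0 0 0 1 with hF
  have hEherm : Eᴴ = E := by
    simp [hE, Matrix.fromBlocks_conjTranspose]
  have hFherm : Fᴴ = F := by
    simp [hF, Matrix.fromBlocks_conjTranspose]
  have hEE : E * E = E := by
    simp [hE, Matrix.fromBlocks_multiply]
  have hFF : F * F = F := by
    simp [hF, Matrix.fromBlocks_multiply]
  have hEF : E + F = 1 := by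
    simp [hE, hF, Matrix.fromBlocks_add, ← Matrix.fromBlocks_one]
  set S₁ : Matrix (Fin n ⊕ Fin m) (Fin n ⊕ Fin m) ℂ := T * E with hS₁
  set S₂ : Matrix (Fin n ⊕ Fin m) (Fin n ⊕ Fin m) ℂ := T * F with hS₂
  have h₁ : S₁ * S₁ᴴ + S₂ * S₂ᴴ = M := by
    rw [hS₁, hS₂, Matrix.conjTranspose_mul, Matrix.conjTranspose_mul, hTherm, hEherm, hFherm]
    calc T * E * (E * T) + T * F * (F * T)
        = T * (E * E) * T + T * (F * F) * T := by noncomm_ring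
      _ = T * (E + F) * T := by rw [hEE, hFF]; noncomm_ring
      _ = M := by rw [hEF, Matrix.mul_one, hTT]
  have h₂ : S₁ᴴ * S₁ = fromBlocks A 0 0 0 := by
    rw [hS₁, Matrix.conjTranspose_mul, hTherm, hEherm]
    calc E * T * (T * E) = E * (T * T) * E := by noncomm_ring
      _ = E * M * E := by rw [hTT]
      _ = fromBlocks A 0 0 0 := by
        simp [hE, hMdef, Matrix.fromBlocks_multiply]
  have h₃ : S₂ᴴ * S₂ = fromBlocks 0 0 0 B := by
    rw [hS₂, Matrix.conjTranspose_mul, hTherm, hFherm]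
    calc F * T * (T * F) = F * (T * T) * F := by noncomm_ring
      _ = F * M * F := by rw [hTT]
      _ = fromBlocks 0 0 0 B := by
        simp [hF, hMdef, Matrix.fromBlocks_multiply]
  obtain ⟨U, hU⟩ := exists_unitary_mul_conjTranspose S₁
  obtain ⟨V, hV⟩ := exists_unitary_mul_conjTranspose S₂
  refine ⟨U, V, ?_⟩
  rw [← h₂, ← h₃, ← hU, ← hV, h₁]
end

section
/- Let M = [[A, X], [X*, B]] be a positive semi-definite block matrix with A ∈ M_n^+ and B ∈ M_m^+. Then for every unitarily invariant norm ‖·‖, ‖M‖ ≤ ‖A ⊕ 0‖ + ‖0 ⊕ B‖. -/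
open Matrix ComplexOrder
open scoped MatrixOrder

section Aux

variable {N : Type*} [Fintype N] [DecidableEq N]

/-- The evaluation of the characteristic polynomial of `-S` at `z` is `det (z • 1 + S)`. -/
lemma eval_charpoly_neg (S : Matrix N N ℂ) (z : ℂ) :
    ((-S).charpoly).eval z = det (z • (1 : Matrix N N ℂ) + S) := by
  have h := RingHom.map_det (Polynomial.evalRingHom z) (charmatrix (-S))
  have hmap : (charmatrix (-S)).map (Polynomial.evalRingHom z) = z • (1 : Matrix N N ℂ) + S := by
    ext i j
    by_cases hij : i = j
    · subst hij
      simp [charmatrix_apply_eq]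
    · simp [charmatrix_apply_ne _ _ _ hij, Matrix.one_apply_ne hij]
  rw [RingHom.mapMatrix_apply, hmap] at h
  simpa [Matrix.charpoly] using h

/-- For invertible square `B`, `f (Bᴴ * B) = f (B * Bᴴ)` via polar decomposition. -/
lemma f_conj_unit (f : Matrix N N ℂ → ℝ)
    (hf_inv : ∀ (T : Matrix N N ℂ) (U V : Matrix.unitaryGroup N ℂ),
      f ((U : Matrix N N ℂ) * T * (V : Matrix N N ℂ)) = f T)
    (B : Matrix N N ℂ) (hB : IsUnit B.det) :
    f (Bᴴ * B) = f (B * Bᴴ) := by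
  have hH : (Bᴴ * B).PosSemidef := Matrix.posSemidef_conjTranspose_mul_self B
  set R := CFC.sqrt (Bᴴ * B) with hRdef
  have hRR : R * R = Bᴴ * B := CFC.sqrt_mul_sqrt_self _ hH.nonneg
  have hRherm : Rᴴ = R := (CFC.sqrt_nonneg (Bᴴ * B)).posSemidef.1
  have hdetR : IsUnit R.det := by
    have hprod : R.det * R.det = (Bᴴ * B).det := by rw [← Matrix.det_mul, hRR]
    have hdet : IsUnit (Bᴴ * B).det := by
      rw [Matrix.det_mul, Matrix.det_conjTranspose]
      exact (hB.map (starRingEnd ℂ)).mul hB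
    have h := isUnit_iff_ne_zero.mp hdet
    refine isUnit_iff_ne_zero.mpr fun h0 => ?_
    rw [h0, zero_mul] at hprod
    exact h hprod.symm
  have hRinv : R * R⁻¹ = 1 := Matrix.mul_nonsing_inv R hdetR
  have hRinv' : R⁻¹ * R = 1 := Matrix.nonsing_inv_mul R hdetR
  have hRinvH : (R⁻¹)ᴴ = R⁻¹ := by
    rw [Matrix.conjTranspose_nonsing_inv, hRherm]
  set U := B * R⁻¹ with hUdef
  have hUH : Uᴴ = R⁻¹ * Bᴴ := by
    rw [hUdef, Matrix.conjTranspose_mul, hRinvH]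
  have hUUH : Uᴴ * U = 1 := by
    rw [hUH, hUdef]
    calc R⁻¹ * Bᴴ * (B * R⁻¹) = R⁻¹ * (Bᴴ * B) * R⁻¹ := by
          simp only [Matrix.mul_assoc]
      _ = R⁻¹ * (R * R) * R⁻¹ := by rw [hRR]
      _ = (R⁻¹ * R) * (R * R⁻¹) := by simp only [Matrix.mul_assoc]
      _ = 1 := by rw [hRinv, hRinv', one_mul]
  have hUmem : U ∈ Matrix.unitaryGroup N ℂ := by
    rw [Matrix.mem_unitaryGroup_iff']
    exact hUUH
  have hUHmem : Uᴴ ∈ Matrix.unitaryGroup N ℂ := by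
    rw [Matrix.mem_unitaryGroup_iff]
    show Uᴴ * Uᴴᴴ = 1
    rw [Matrix.conjTranspose_conjTranspose]
    exact hUUH
  have hconj : B * Bᴴ = U * (Bᴴ * B) * Uᴴ := by
    rw [hUdef, hUH, ← hRR]
    refine Eq.symm ?_
    calc B * R⁻¹ * (R * R) * (R⁻¹ * Bᴴ)
        = B * ((R⁻¹ * R) * (R * R⁻¹)) * Bᴴ := by simp only [Matrix.mul_assoc]
      _ = B * Bᴴ := by rw [hRinv, hRinv']; simp [Matrix.mul_assoc]
  rw [hconj]
  exact (hf_inv (Bᴴ * B) ⟨U, hUmem⟩ ⟨Uᴴ, hUHmem⟩).symm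

/-- For any square `S`, `f (Sᴴ * S) = f (S * Sᴴ)` by perturbing `S` to an invertible matrix. -/
lemma f_conj_any (f : Matrix N N ℂ → ℝ)
    (hf_nonneg : ∀ T, 0 ≤ f T)
    (hf_smul : ∀ (c : ℂ) T, f (c • T) = ‖c‖ * f T)
    (hf_add : ∀ S T, f (S + T) ≤ f S + f T)
    (hf_inv : ∀ (T : Matrix N N ℂ) (U V : Matrix.unitaryGroup N ℂ),
      f ((U : Matrix N N ℂ) * T * (V : Matrix N N ℂ)) = f T)
    (S : Matrix N N ℂ) :
    f (Sᴴ * S) = f (S * Sᴴ) := by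
  -- basic consequences of the norm axioms
  have hneg : ∀ T : Matrix N N ℂ, f (-T) = f T := by
    intro T
    have := hf_smul (-1) T
    simpa using this
  have hsub : ∀ X Y : Matrix N N ℂ, |f X - f Y| ≤ f (X - Y) := by
    intro X Y
    rw [abs_sub_le_iff]
    constructor
    · have h0 := hf_add Y (X - Y)
      simp only [add_sub_cancel] at h0
      linarith
    · have h1 := hf_add X (Y - X)
      have h2 : f (Y - X) = f (X - Y) := by
        rw [← hneg (X - Y)]; congr 1; abel
      simp only [add_sub_cancel] at h1
      linarith
  set C : ℝ := f S + f Sᴴ + f 1 with hC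
  have hC0 : 0 ≤ C := by
    have := hf_nonneg S; have := hf_nonneg Sᴴ; have := hf_nonneg 1
    positivity
  -- the perturbation estimate
  have hkey : ∀ ε : ℝ, 0 < ε → ε ≤ 1 → IsUnit (S + (ε : ℂ) • 1).det →
      |f (Sᴴ * S) - f (S * Sᴴ)| ≤ ε * (2 * C) := by
    intro ε hε hε1 hunit
    set Bm : Matrix N N ℂ := S + (ε : ℂ) • 1 with hBm
    have hBmH : Bmᴴ = Sᴴ + (ε : ℂ) • 1 := by
      rw [hBm]
      simp [Matrix.conjTranspose_smul, Complex.conj_ofReal]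
    have hfB : f (Bmᴴ * Bm) = f (Bm * Bmᴴ) := f_conj_unit f hf_inv Bm hunit
    -- difference bound for each term
    have hd1 : Bmᴴ * Bm - Sᴴ * S = (ε : ℂ) • (Sᴴ + S) + ((ε : ℂ) * ε) • 1 := by
      rw [hBm, hBmH]
      simp only [Matrix.add_mul, Matrix.mul_add, Matrix.smul_mul, Matrix.mul_smul,
        Matrix.mul_one, Matrix.one_mul, smul_add, smul_smul]
      abel
    have hd2 : Bm * Bmᴴ - S * Sᴴ = (ε : ℂ) • (Sᴴ + S) + ((ε : ℂ) * ε) • 1 := by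
      rw [hBm, hBmH]
      simp only [Matrix.add_mul, Matrix.mul_add, Matrix.smul_mul, Matrix.mul_smul,
        Matrix.mul_one, Matrix.one_mul, smul_add, smul_smul]
      abel
    have habs : ‖(ε : ℂ)‖ = ε := by
      rw [Complex.norm_real, Real.norm_eq_abs, abs_of_pos hε]
    have hbound : f ((ε : ℂ) • (Sᴴ + S) + ((ε : ℂ) * ε) • 1) ≤ ε * C := by
      calc f ((ε : ℂ) • (Sᴴ + S) + ((ε : ℂ) * ε) • 1)
          ≤ f ((ε : ℂ) • (Sᴴ + S)) + f (((ε : ℂ) * ε) • 1) := hf_add _ _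
        _ = ε * f (Sᴴ + S) + (ε * ε) * f 1 := by
            have habs2 : ‖(ε : ℂ) * ε‖ = ε * ε := by
              rw [norm_mul, habs]
            rw [hf_smul, hf_smul, habs, habs2]
        _ ≤ ε * C := by
            have h1 : f (Sᴴ + S) ≤ f Sᴴ + f S := hf_add _ _
            have h3 : 0 ≤ f 1 := hf_nonneg 1
            have a1 : ε * f (Sᴴ + S) ≤ ε * (f Sᴴ + f S) :=
              mul_le_mul_of_nonneg_left h1 hε.le
            have a2 : ε * ε * f 1 ≤ ε * f 1 := by nlinarith [mul_nonneg (sub_nonneg.mpr hε1) (mul_nonneg hε.le h3)]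
            rw [hC]
            linarith
    have e1 : |f (Sᴴ * S) - f (Bmᴴ * Bm)| ≤ ε * C := by
      have h := hsub (Sᴴ * S) (Bmᴴ * Bm)
      have heq : Sᴴ * S - Bmᴴ * Bm = -((ε : ℂ) • (Sᴴ + S) + ((ε : ℂ) * ε) • 1) := by
        rw [← hd1]; abel
      rw [heq, hneg] at h
      exact h.trans hbound
    have e2 : |f (S * Sᴴ) - f (Bm * Bmᴴ)| ≤ ε * C := by
      have h := hsub (S * Sᴴ) (Bm * Bmᴴ)
      have heq : S * Sᴴ - Bm * Bmᴴ = -((ε : ℂ) • (Sᴴ + S) + ((ε : ℂ) * ε) • 1) := by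
        rw [← hd2]; abel
      rw [heq, hneg] at h
      exact h.trans hbound
    calc |f (Sᴴ * S) - f (S * Sᴴ)|
        = |(f (Sᴴ * S) - f (Bmᴴ * Bm)) - (f (S * Sᴴ) - f (Bm * Bmᴴ))| := by
          rw [hfB]; ring_nf
      _ ≤ |f (Sᴴ * S) - f (Bmᴴ * Bm)| + |f (S * Sᴴ) - f (Bm * Bmᴴ)| := abs_sub _ _
      _ ≤ ε * C + ε * C := add_le_add e1 e2
      _ = ε * (2 * C) := by ring
  -- existence of arbitrarily small good ε
  have hgood : ∀ δ : ℝ, 0 < δ → ∃ ε : ℝ, 0 < ε ∧ ε ≤ 1 ∧ ε ≤ δ ∧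
      IsUnit (S + (ε : ℂ) • 1).det := by
    intro δ hδ
    have hp : (-S).charpoly ≠ 0 := (Matrix.charpoly_monic _).ne_zero
    have h1 : {z : ℂ | ((-S).charpoly).IsRoot z}.Finite :=
      Polynomial.finite_setOf_isRoot hp
    have hfin : {x : ℝ | ((-S).charpoly).eval (x : ℂ) = 0}.Finite := by
      have heq : {x : ℝ | ((-S).charpoly).eval (x : ℂ) = 0}
          = (fun x : ℝ => (x : ℂ)) ⁻¹' {z : ℂ | ((-S).charpoly).IsRoot z} := rfl
      rw [heq]
      exact h1.preimage Complex.ofReal_injective.injOn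
    have hmin : 0 < min 1 δ := lt_min one_pos hδ
    have hinf : (Set.Ioc (0 : ℝ) (min 1 δ)).Infinite := Set.Ioc_infinite hmin
    obtain ⟨ε, hε⟩ := (hinf.diff hfin).nonempty
    obtain ⟨hε1, hε2⟩ := hε
    refine ⟨ε, hε1.1, le_trans hε1.2 (min_le_left _ _), le_trans hε1.2 (min_le_right _ _), ?_⟩
    have hne : ((-S).charpoly).eval (ε : ℂ) ≠ 0 := hε2
    rw [eval_charpoly_neg] at hne
    have : (S + (ε : ℂ) • 1).det ≠ 0 := by
      rwa [add_comm] at hne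
    exact isUnit_iff_ne_zero.mpr this
  -- conclude
  have hfinal : ∀ δ : ℝ, 0 < δ → |f (Sᴴ * S) - f (S * Sᴴ)| ≤ δ := by
    intro δ hδ
    have hδ' : 0 < δ / (2 * C + 1) := by positivity
    obtain ⟨ε, hε0, hε1, hεδ, hεu⟩ := hgood (δ / (2 * C + 1)) hδ'
    have h := hkey ε hε0 hε1 hεu
    calc |f (Sᴴ * S) - f (S * Sᴴ)| ≤ ε * (2 * C) := h
      _ ≤ (δ / (2 * C + 1)) * (2 * C + 1) := by nlinarith
      _ = δ := by field_simp
  have : |f (Sᴴ * S) - f (S * Sᴴ)| ≤ 0 := by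
    by_contra hcon
    push_neg at hcon
    have := hfinal (|f (Sᴴ * S) - f (S * Sᴴ)| / 2) (by linarith)
    linarith
  have : f (Sᴴ * S) - f (S * Sᴴ) = 0 := by
    have := abs_nonneg (f (Sᴴ * S) - f (S * Sᴴ))
    have habs0 : |f (Sᴴ * S) - f (S * Sᴴ)| = 0 := le_antisymm ‹_› ‹_›
    exact abs_eq_zero.mp habs0
  linarith

end Aux

theorem norm_sub_additive_blocks (n m : ℕ)
    (A : Matrix (Fin n) (Fin n) ℂ) (B : Matrix (Fin m) (Fin m) ℂ)
    (X : Matrix (Fin n) (Fin m) ℂ)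
    (hM : (fromBlocks A X Xᴴ B).PosSemidef)
    (hA : A.PosSemidef) (hB : B.PosSemidef)
    (f : Matrix (Fin n ⊕ Fin m) (Fin n ⊕ Fin m) ℂ → ℝ)
    (hf_nonneg : ∀ T, 0 ≤ f T)
    (hf_smul : ∀ (c : ℂ) T, f (c • T) = ‖c‖ * f T)
    (hf_add : ∀ S T, f (S + T) ≤ f S + f T)
    (hf_inv : ∀ (T : Matrix (Fin n ⊕ Fin m) (Fin n ⊕ Fin m) ℂ)
      (U V : Matrix.unitaryGroup (Fin n ⊕ Fin m) ℂ),
      f ((U : Matrix _ _ ℂ) * T * (V : Matrix _ _ ℂ)) = f T) :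
    f (fromBlocks A X Xᴴ B) ≤ f (fromBlocks A 0 0 0) + f (fromBlocks 0 0 0 B) := by
  classical
  set M : Matrix (Fin n ⊕ Fin m) (Fin n ⊕ Fin m) ℂ := fromBlocks A X Xᴴ B with hMdef
  set T := CFC.sqrt M with hTdef
  have hTT : T * T = M := CFC.sqrt_mul_sqrt_self _ hM.nonneg
  have hTh : Tᴴ = T := (CFC.sqrt_nonneg M).posSemidef.1
  set P : Matrix (Fin n ⊕ Fin m) (Fin n ⊕ Fin m) ℂ := fromBlocks 1 0 0 0 with hPdef
  set Q : Matrix (Fin n ⊕ Fin m) (Fin n ⊕ Fin m) ℂ := fromBlocks 0 0 0 1 with hQdef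
  have hPQ : P + Q = 1 := by
    rw [hPdef, hQdef, Matrix.fromBlocks_add, ← Matrix.fromBlocks_one]
    simp
  have hPh : Pᴴ = P := by
    rw [hPdef, Matrix.fromBlocks_conjTranspose]
    simp
  have hQh : Qᴴ = Q := by
    rw [hQdef, Matrix.fromBlocks_conjTranspose]
    simp
  have hPP : P * P = P := by
    rw [hPdef, Matrix.fromBlocks_multiply]
    simp
  have hQQ : Q * Q = Q := by
    rw [hQdef, Matrix.fromBlocks_multiply]
    simp
  have hPMP : P * M * P = fromBlocks A 0 0 0 := by
    rw [hMdef, hPdef, Matrix.fromBlocks_multiply, Matrix.fromBlocks_multiply]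
    simp
  have hQMQ : Q * M * Q = fromBlocks 0 0 0 B := by
    rw [hMdef, hQdef, Matrix.fromBlocks_multiply, Matrix.fromBlocks_multiply]
    simp
  have hsplit : M = T * P * T + T * Q * T := by
    calc M = T * T := hTT.symm
      _ = T * (P + Q) * T := by rw [hPQ, mul_one]
      _ = T * P * T + T * Q * T := by
          rw [Matrix.mul_add, Matrix.add_mul]
  have key1 : f (T * P * T) = f (fromBlocks A 0 0 0) := by
    have hS : T * P * T = (P * T)ᴴ * (P * T) := by
      rw [Matrix.conjTranspose_mul, hTh, hPh]
      calc T * P * T = T * (P * P) * T := by rw [hPP]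
        _ = T * P * (P * T) := by simp only [Matrix.mul_assoc]
    have hS2 : (P * T) * (P * T)ᴴ = fromBlocks A 0 0 0 := by
      rw [Matrix.conjTranspose_mul, hTh, hPh, ← hPMP, ← hTT]
      simp only [Matrix.mul_assoc]
    rw [hS, f_conj_any f hf_nonneg hf_smul hf_add hf_inv (P * T), hS2]
  have key2 : f (T * Q * T) = f (fromBlocks 0 0 0 B) := by
    have hS : T * Q * T = (Q * T)ᴴ * (Q * T) := by
      rw [Matrix.conjTranspose_mul, hTh, hQh]
      calc T * Q * T = T * (Q * Q) * T := by rw [hQQ]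
        _ = T * Q * (Q * T) := by simp only [Matrix.mul_assoc]
    have hS2 : (Q * T) * (Q * T)ᴴ = fromBlocks 0 0 0 B := by
      rw [Matrix.conjTranspose_mul, hTh, hQh, ← hQMQ, ← hTT]
      simp only [Matrix.mul_assoc]
    rw [hS, f_conj_any f hf_nonneg hf_smul hf_add hf_inv (Q * T), hS2]
  calc f (fromBlocks A X Xᴴ B) = f (T * P * T + T * Q * T) := by rw [← hsplit]
    _ ≤ f (T * P * T) + f (T * Q * T) := hf_add _ _
    _ = f (fromBlocks A 0 0 0) + f (fromBlocks 0 0 0 B) := by rw [key1, key2]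
end

section
/- Let M = [[A, X], [X*, B]] ∈ M_{2n}^+ be positive semi-definite with all blocks of size n×n. Then there exist unitary matrices U, V ∈ M_{2n} such that M = U ((A+B)/2 − Re(X)) ⊕ 0) U* + V (0 ⊕ ((A+B)/2 + Re(X))) V*. -/
open Matrix Polynomial ComplexOrder
section Aux
variable {m : Type*} [Fintype m] [DecidableEq m]
variable {m : Type*} [Fintype m] [DecidableEq m]

lemma myEvalCharmatrix (M : Matrix m m ℂ) (x : ℂ) :
    (charmatrix M).map (evalRingHom x) = x • (1 : Matrix m m ℂ) - M := by
  ext i j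
  by_cases h : i = j
  · subst h; simp [charmatrix_apply_eq]
  · simp [charmatrix_apply_ne _ _ _ h, Matrix.one_apply_ne h]

lemma myEvalCharpoly (M : Matrix m m ℂ) (x : ℂ) :
    M.charpoly.eval x = (x • (1 : Matrix m m ℂ) - M).det := by
  rw [Matrix.charpoly, ← myEvalCharmatrix M x]
  exact (RingHom.map_det (evalRingHom x) _).trans (by rw [RingHom.mapMatrix_apply])

lemma myCharpolyMulComm (A B : Matrix m m ℂ) : (A * B).charpoly = (B * A).charpoly := by
  apply Polynomial.funext
  intro x
  rw [myEvalCharpoly, myEvalCharpoly]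
  rcases eq_or_ne x 0 with rfl | hx
  · simp only [zero_smul, zero_sub, det_neg]
    rw [det_mul, det_mul, mul_comm (det A)]
  · have key : ∀ C D : Matrix m m ℂ,
        x • (1 : Matrix m m ℂ) - C * D = x • ((1 : Matrix m m ℂ) + (-(x⁻¹ • C)) * D) := by
      intro C D
      rw [Matrix.neg_mul, smul_add, smul_neg, Matrix.smul_mul, smul_smul,
        mul_inv_cancel₀ hx, one_smul, sub_eq_add_neg]
    rw [key A B, key B A, det_smul, det_smul, Matrix.det_one_add_mul_comm]
    congr 2
    rw [Matrix.mul_neg, Matrix.neg_mul, Matrix.mul_smul, Matrix.smul_mul]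

lemma myCharpolyUnitaryConj (U : Matrix.unitaryGroup m ℂ) (M : Matrix m m ℂ) :
    ((U : Matrix m m ℂ) * M * (star U : Matrix m m ℂ)).charpoly = M.charpoly := by
  apply Polynomial.funext
  intro x
  rw [myEvalCharpoly, myEvalCharpoly]
  have h1 : x • (1 : Matrix m m ℂ) - (U : Matrix m m ℂ) * M * (star U : Matrix m m ℂ)
      = (U : Matrix m m ℂ) * (x • (1 : Matrix m m ℂ) - M) * (star U : Matrix m m ℂ) := by
    rw [Matrix.mul_sub, Matrix.sub_mul, Matrix.mul_smul, Matrix.mul_one, Matrix.smul_mul,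
      Matrix.mem_unitaryGroup_iff.mp U.2]
  rw [h1, det_mul, det_mul, mul_comm, ← mul_assoc, ← det_mul,
    show (star U : Matrix m m ℂ) * (U : Matrix m m ℂ) = 1 from
      Matrix.mem_unitaryGroup_iff'.mp U.2, det_one, one_mul]

lemma myCharpolyDiagonal (d : m → ℂ) :
    (Matrix.diagonal d).charpoly = ∏ i, (X - C (d i)) := by
  have : charmatrix (Matrix.diagonal d) = Matrix.diagonal (fun i => (X : ℂ[X]) - C (d i)) := by
    ext i j
    by_cases h : i = j
    · subst h; simp [charmatrix_apply_eq]
    · simp [charmatrix_apply_ne _ _ _ h, Matrix.diagonal_apply_ne _ h]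
  rw [Matrix.charpoly, this, det_diagonal]

lemma myCharpolyHermitian {M : Matrix m m ℂ} (hM : M.IsHermitian) :
    M.charpoly = ∏ i, (X - C (hM.eigenvalues i : ℂ)) := by
  conv_lhs => rw [hM.spectral_theorem, Unitary.conjStarAlgAut_apply]
  rw [myCharpolyUnitaryConj hM.eigenvectorUnitary, myCharpolyDiagonal]
  rfl

omit [DecidableEq m] in
lemma myMapPermMultiset {α : Type*} (σ : Equiv.Perm m) (f : m → α) :
    Finset.univ.val.map (f ∘ σ) = Finset.univ.val.map f := by
  have h : (Finset.univ.val.map (σ : m → m)) = Finset.univ.val := by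
    have h2 : (Finset.univ.val.map (σ : m → m)) = (Finset.univ.map σ.toEmbedding).val := rfl
    rw [h2, Finset.map_univ_equiv]
  have h3 : Finset.univ.val.map (f ∘ σ) = (Finset.univ.val.map (σ : m → m)).map f :=
    (Multiset.map_map f _ _).symm
  rw [h3, h]

lemma myExistsPerm {α : Type*} [LinearOrder α] (f g : m → α)
    (h : Finset.univ.val.map f = Finset.univ.val.map g) : ∃ σ : Equiv.Perm m, f = g ∘ σ := by
  classical
  obtain ⟨N, ⟨e⟩⟩ : ∃ N, Nonempty (m ≃ Fin N) := ⟨Fintype.card m, ⟨Fintype.equivFin m⟩⟩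
  set f' : Fin N → α := f ∘ e.symm with hf'
  set g' : Fin N → α := g ∘ e.symm with hg'
  have hmap : ∀ (u : m → α), (Finset.univ.val : Multiset (Fin N)).map (u ∘ e.symm)
      = (Finset.univ.val : Multiset m).map u := by
    intro u
    have h1 : (Finset.univ.val : Multiset (Fin N)).map (u ∘ e.symm)
        = ((Finset.univ.val : Multiset (Fin N)).map (e.symm : Fin N → m)).map u :=
      (Multiset.map_map u _ _).symm
    have h2 : (Finset.univ.val : Multiset (Fin N)).map (e.symm : Fin N → m)
        = (Finset.univ.map (e.symm.toEmbedding)).val := rfl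
    rw [h1, h2, Finset.map_univ_equiv]
  have h' : Finset.univ.val.map f' = Finset.univ.val.map g' := by
    rw [hf', hg', hmap, hmap, h]
  set σf := Tuple.sort f'
  set σg := Tuple.sort g'
  have hmult : (↑(List.ofFn (f' ∘ σf)) : Multiset α) = (↑(List.ofFn (g' ∘ σg)) : Multiset α) := by
    rw [← Fin.univ_val_map, ← Fin.univ_val_map, myMapPermMultiset σf f',
      myMapPermMultiset σg g', h']
  have hperm : (List.ofFn (f' ∘ σf)).Perm (List.ofFn (g' ∘ σg)) :=
    Multiset.coe_eq_coe.mp hmult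
  have heq : f' ∘ σf = g' ∘ σg := by
    apply List.ofFn_injective
    exact List.Perm.eq_of_sortedLE
      (List.sortedLE_ofFn_iff.mpr (Tuple.monotone_sort f'))
      (List.sortedLE_ofFn_iff.mpr (Tuple.monotone_sort g')) hperm
  refine ⟨e.trans (((σf.symm : Equiv.Perm (Fin N)).trans σg).trans e.symm), ?_⟩
  funext x
  have hx := congrFun heq (σf.symm (e x))
  simpa [hf', hg'] using hx

lemma myPermConj (σ : Equiv.Perm m) (d : m → ℂ) :
    ∃ P : Matrix.unitaryGroup m ℂ,
      Matrix.diagonal (d ∘ σ) = (P : Matrix m m ℂ) * Matrix.diagonal d * (P : Matrix m m ℂ)ᴴ := by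
  set P : Matrix m m ℂ := (1 : Matrix m m ℂ).submatrix σ id with hP
  have hPH : Pᴴ = (1 : Matrix m m ℂ).submatrix id σ := by
    rw [hP, conjTranspose_submatrix, conjTranspose_one]
  have hmem : P ∈ Matrix.unitaryGroup m ℂ := by
    rw [Matrix.mem_unitaryGroup_iff]
    rw [Matrix.star_eq_conjTranspose, hPH, hP]
    have : ((1 : Matrix m m ℂ).submatrix (σ : m → m) (Equiv.refl m)) *
        ((1 : Matrix m m ℂ).submatrix (Equiv.refl m) (σ : m → m)) =
        ((1 : Matrix m m ℂ) * 1).submatrix (σ : m → m) (σ : m → m) :=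
      Matrix.submatrix_mul_equiv 1 1 _ _ _
    simpa using this
  refine ⟨⟨P, hmem⟩, ?_⟩
  have h1 : P * Matrix.diagonal d = (Matrix.diagonal d).submatrix σ id := by
    rw [hP]
    have := Matrix.one_submatrix_mul (σ : m → m) (Equiv.refl m) (Matrix.diagonal d)
    simpa using this
  have h2 : (Matrix.diagonal d).submatrix σ id * Pᴴ = (Matrix.diagonal d).submatrix σ σ := by
    rw [hPH]
    have := Matrix.mul_submatrix_one (Equiv.refl m) (σ : m → m)
      ((Matrix.diagonal d).submatrix σ id)
    simpa using this
  rw [h1, h2, Matrix.submatrix_diagonal_equiv]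

lemma myShiftUnitary (S : Matrix m m ℂ) :
    ∃ W : Matrix.unitaryGroup m ℂ,
      S * Sᴴ = (W : Matrix m m ℂ) * (Sᴴ * S) * (W : Matrix m m ℂ)ᴴ := by
  have h1 : (S * Sᴴ).IsHermitian := isHermitian_mul_conjTranspose_self S
  have h2 : (Sᴴ * S).IsHermitian := by simpa using isHermitian_mul_conjTranspose_self Sᴴ
  have hc : (S * Sᴴ).charpoly = (Sᴴ * S).charpoly := myCharpolyMulComm S Sᴴ
  rw [myCharpolyHermitian h1, myCharpolyHermitian h2] at hc
  have hprod : ∀ (u : m → ℂ), (∏ i, (X - C (u i)))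
      = ((Finset.univ.val.map u).map (fun a => X - C a)).prod := by
    intro u
    rw [Multiset.map_map]
    rfl
  rw [hprod, hprod] at hc
  have hroots : Finset.univ.val.map (fun i => (h1.eigenvalues i : ℂ))
      = Finset.univ.val.map (fun i => (h2.eigenvalues i : ℂ)) := by
    have := congrArg Polynomial.roots hc
    rwa [Polynomial.roots_multiset_prod_X_sub_C, Polynomial.roots_multiset_prod_X_sub_C] at this
  have hreal : Finset.univ.val.map h1.eigenvalues = Finset.univ.val.map h2.eigenvalues := by
    apply Multiset.map_injective (f := (RCLike.ofReal : ℝ → ℂ)) RCLike.ofReal_injective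
    rw [Multiset.map_map, Multiset.map_map]
    exact hroots
  obtain ⟨σ, hσ⟩ := myExistsPerm h1.eigenvalues h2.eigenvalues hreal
  obtain ⟨P, hPc⟩ := myPermConj σ (fun i => (h2.eigenvalues i : ℂ))
  have hD : Matrix.diagonal ((RCLike.ofReal : ℝ → ℂ) ∘ h1.eigenvalues)
      = (P : Matrix m m ℂ) * Matrix.diagonal ((RCLike.ofReal : ℝ → ℂ) ∘ h2.eigenvalues)
        * (P : Matrix m m ℂ)ᴴ := by
    have : ((RCLike.ofReal : ℝ → ℂ) ∘ h1.eigenvalues) = ((fun i => (h2.eigenvalues i : ℂ)) ∘ σ) := by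
      funext i; simp [hσ, Function.comp]
    rw [this]
    exact hPc
  set U1 := h1.eigenvectorUnitary
  set U2 := h2.eigenvectorUnitary
  refine ⟨U1 * P * star U2, ?_⟩
  have hW : ((U1 * P * star U2 : Matrix.unitaryGroup m ℂ) : Matrix m m ℂ)
      = (U1 : Matrix m m ℂ) * (P : Matrix m m ℂ) * (star U2 : Matrix m m ℂ) := rfl
  rw [hW]
  have e1 := h1.spectral_theorem; rw [Unitary.conjStarAlgAut_apply] at e1
  have e2 := h2.spectral_theorem; rw [Unitary.conjStarAlgAut_apply] at e2
  have hu : (star (U2 : Matrix m m ℂ)) * (U2 : Matrix m m ℂ) = 1 :=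
    Matrix.mem_unitaryGroup_iff'.mp U2.2
  have hmid : (star (U2 : Matrix m m ℂ)) * (Sᴴ * S) * (U2 : Matrix m m ℂ)
      = Matrix.diagonal ((RCLike.ofReal : ℝ → ℂ) ∘ h2.eigenvalues) := by
    conv_lhs => rw [e2]
    rw [← Matrix.mul_assoc, ← Matrix.mul_assoc, hu, Matrix.one_mul, Matrix.mul_assoc, hu,
      Matrix.mul_one]
  rw [e1, hD, ← hmid]
  simp only [Matrix.star_eq_conjTranspose, conjTranspose_mul, conjTranspose_conjTranspose]
  noncomm_ring

open scoped MatrixOrder in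
lemma myBlockDecomp {k k' : Type*} [Fintype k] [Fintype k'] [DecidableEq k] [DecidableEq k']
    (C : Matrix k k ℂ) (Y : Matrix k k' ℂ) (Z : Matrix k' k ℂ) (D : Matrix k' k' ℂ)
    (hN : (fromBlocks C Y Z D).PosSemidef) :
    ∃ W₁ W₂ : Matrix.unitaryGroup (k ⊕ k') ℂ,
      fromBlocks C Y Z D =
        (W₁ : Matrix _ _ ℂ) * fromBlocks C 0 0 0 * (W₁ : Matrix _ _ ℂ)ᴴ +
        (W₂ : Matrix _ _ ℂ) * fromBlocks 0 0 0 D * (W₂ : Matrix _ _ ℂ)ᴴ := by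
  set T := CFC.sqrt (fromBlocks C Y Z D) with hTdef
  have hTT : T * T = fromBlocks C Y Z D := CFC.sqrt_mul_sqrt_self _ hN.nonneg
  have hTH : Tᴴ = T := (CFC.sqrt_nonneg _).posSemidef.1
  set E₁ : Matrix (k ⊕ k') (k ⊕ k') ℂ := fromBlocks 1 0 0 0 with hE₁
  set E₂ : Matrix (k ⊕ k') (k ⊕ k') ℂ := fromBlocks 0 0 0 1 with hE₂
  have hE₁H : E₁ᴴ = E₁ := by
    rw [hE₁, fromBlocks_conjTranspose]; simp
  have hE₂H : E₂ᴴ = E₂ := by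
    rw [hE₂, fromBlocks_conjTranspose]; simp
  have hE₁sq : E₁ * E₁ = E₁ := by simp [hE₁, fromBlocks_multiply]
  have hE₂sq : E₂ * E₂ = E₂ := by simp [hE₂, fromBlocks_multiply]
  have hEsum : E₁ + E₂ = 1 := by
    rw [hE₁, hE₂, fromBlocks_add]
    simp [fromBlocks_one]
  set S₁ := T * E₁ with hS₁
  set S₂ := T * E₂ with hS₂
  have hSum : S₁ * S₁ᴴ + S₂ * S₂ᴴ = fromBlocks C Y Z D := by
    rw [hS₁, hS₂, conjTranspose_mul, conjTranspose_mul, hTH, hE₁H, hE₂H,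
      show T * E₁ * (E₁ * T) = T * (E₁ * E₁) * T by noncomm_ring,
      show T * E₂ * (E₂ * T) = T * (E₂ * E₂) * T by noncomm_ring, hE₁sq, hE₂sq,
      show T * E₁ * T + T * E₂ * T = T * (E₁ + E₂) * T by noncomm_ring, hEsum,
      Matrix.mul_one, hTT]
  have hS₁s : S₁ᴴ * S₁ = fromBlocks C 0 0 0 := by
    rw [hS₁, conjTranspose_mul, hTH, hE₁H,
      show E₁ * T * (T * E₁) = E₁ * (T * T) * E₁ by noncomm_ring, hTT, hE₁]
    simp [fromBlocks_multiply]
  have hS₂s : S₂ᴴ * S₂ = fromBlocks 0 0 0 D := by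
    rw [hS₂, conjTranspose_mul, hTH, hE₂H,
      show E₂ * T * (T * E₂) = E₂ * (T * T) * E₂ by noncomm_ring, hTT, hE₂]
    simp [fromBlocks_multiply]
  obtain ⟨W₁, hW₁⟩ := myShiftUnitary S₁
  obtain ⟨W₂, hW₂⟩ := myShiftUnitary S₂
  exact ⟨W₁, W₂, by rw [← hSum, hW₁, hW₂, hS₁s, hS₂s]⟩

end Aux

open Matrix ComplexOrder

theorem decomposition_real_part (n : ℕ)
    (A B : Matrix (Fin n) (Fin n) ℂ) (X : Matrix (Fin n) (Fin n) ℂ)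
    (hM : (fromBlocks A X Xᴴ B).PosSemidef) :
    ∃ U V : Matrix.unitaryGroup (Fin n ⊕ Fin n) ℂ,
      fromBlocks A X Xᴴ B =
        (U : Matrix _ _ ℂ) * fromBlocks ((1/2 : ℂ) • (A + B) - (1/2 : ℂ) • (X + Xᴴ)) 0 0 0 * (U : Matrix _ _ ℂ)ᴴ +
        (V : Matrix _ _ ℂ) * fromBlocks 0 0 0 ((1/2 : ℂ) • (A + B) + (1/2 : ℂ) • (X + Xᴴ)) * (V : Matrix _ _ ℂ)ᴴ := by

  set M := fromBlocks A X Xᴴ B with hMdef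
  set c : ℂ := (((Real.sqrt 2)⁻¹ : ℝ) : ℂ) with hc
  have hcstar : star c = c := by rw [hc]; exact Complex.conj_ofReal _
  have hcc : c * c = 1/2 := by
    rw [hc, ← Complex.ofReal_mul, ← mul_inv, Real.mul_self_sqrt (by norm_num : (0:ℝ) ≤ 2)]
    norm_num
  set K : Matrix (Fin n ⊕ Fin n) (Fin n ⊕ Fin n) ℂ :=
    fromBlocks 1 (-1) 1 1 with hK
  set J := c • K with hJ
  have hKH : Kᴴ = fromBlocks 1 1 (-1) 1 := by
    rw [hK, fromBlocks_conjTranspose]; simp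
  have hKK : K * Kᴴ = (2:ℂ) • 1 := by
    rw [hKH, hK, fromBlocks_multiply, ← fromBlocks_one, fromBlocks_smul]
    congr 1 <;> try { simp; try module }
  have hJH : Jᴴ = c • Kᴴ := by rw [hJ, conjTranspose_smul, hcstar]
  have hJmem : J ∈ Matrix.unitaryGroup (Fin n ⊕ Fin n) ℂ := by
    rw [Matrix.mem_unitaryGroup_iff, Matrix.star_eq_conjTranspose, hJH, hJ,
      Matrix.smul_mul, Matrix.mul_smul, smul_smul, hcc, hKK, smul_smul]
    norm_num
  set C₀ := (1/2 : ℂ) • (A + B) - (1/2 : ℂ) • (X + Xᴴ) with hC₀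
  set D₀ := (1/2 : ℂ) • (A + B) + (1/2 : ℂ) • (X + Xᴴ) with hD₀
  set Y₀ := (1/2 : ℂ) • (A - Xᴴ + (X - B)) with hY₀
  set Z₀ := (1/2 : ℂ) • (A + Xᴴ - (X + B)) with hZ₀
  have hKMK : K * M * Kᴴ = fromBlocks
      (A - Xᴴ - (X - B)) (A - Xᴴ + (X - B)) (A + Xᴴ - (X + B)) (A + Xᴴ + (X + B)) := by
    rw [hK, hKH, hMdef, fromBlocks_multiply, fromBlocks_multiply, fromBlocks_inj]
    exact ⟨by noncomm_ring, by noncomm_ring, by noncomm_ring, by noncomm_ring⟩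
  have hN' : J * M * Jᴴ = fromBlocks C₀ Y₀ Z₀ D₀ := by
    rw [hJ, hJH, Matrix.smul_mul, Matrix.mul_smul, Matrix.smul_mul, smul_smul, hcc, hKMK,
      fromBlocks_smul, fromBlocks_inj]
    exact ⟨by rw [hC₀]; module, by rw [hY₀], by rw [hZ₀], by rw [hD₀]; module⟩

  have hPSD' : (J * M * Jᴴ).PosSemidef := hM.mul_mul_conjTranspose_same J
  rw [hN'] at hPSD'
  obtain ⟨W₁, W₂, hW⟩ := myBlockDecomp C₀ Y₀ Z₀ D₀ hPSD'
  have hJu : star J * J = 1 := Matrix.mem_unitaryGroup_iff'.mp hJmem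
  have hMrec : M = Jᴴ * (J * M * Jᴴ) * J := by
    have h9 : Jᴴ * J = 1 := by rw [← Matrix.star_eq_conjTranspose]; exact hJu
    rw [show Jᴴ * (J * M * Jᴴ) * J = (Jᴴ * J) * M * (Jᴴ * J) by noncomm_ring, h9,
      Matrix.one_mul, Matrix.mul_one]
  refine ⟨star (⟨J, hJmem⟩ : Matrix.unitaryGroup _ ℂ) * W₁,
    star (⟨J, hJmem⟩ : Matrix.unitaryGroup _ ℂ) * W₂, ?_⟩
  have hco1 : ((star (⟨J, hJmem⟩ : Matrix.unitaryGroup _ ℂ) * W₁ :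
      Matrix.unitaryGroup _ ℂ) : Matrix _ _ ℂ) = Jᴴ * (W₁ : Matrix _ _ ℂ) := by
    rw [← Matrix.star_eq_conjTranspose]; rfl
  have hco2 : ((star (⟨J, hJmem⟩ : Matrix.unitaryGroup _ ℂ) * W₂ :
      Matrix.unitaryGroup _ ℂ) : Matrix _ _ ℂ) = Jᴴ * (W₂ : Matrix _ _ ℂ) := by
    rw [← Matrix.star_eq_conjTranspose]; rfl
  rw [hco1, hco2, hMrec, hN', hW]
  simp only [conjTranspose_mul, conjTranspose_conjTranspose]
  noncomm_ring
end

section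
/- Let M = [[A, X], [X*, B]] ∈ M_{2n}^+ be positive semi-definite with all blocks of size n×n. Then there exist unitary matrices U, V ∈ M_{2n} such that M = U (((A+B)/2 + Im(X)) ⊕ 0) U* + V (0 ⊕ ((A+B)/2 − Im(X))) V*. -/
open Matrix ComplexOrder

open Polynomial in
private lemma aux_eval_charpoly {m : Type*} [Fintype m] [DecidableEq m]
    (M : Matrix m m ℂ) (z : ℂ) :
    M.charpoly.eval z = (z • (1 : Matrix m m ℂ) - M).det := by
  rw [Matrix.charpoly, ← Polynomial.coe_evalRingHom, RingHom.map_det]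
  congr 1
  ext i j
  by_cases h : i = j <;>
    simp [h, Matrix.charmatrix_apply, Matrix.one_apply, Matrix.sub_apply, Matrix.smul_apply,
      Matrix.diagonal_apply]

private lemma aux_charpoly_mul_comm {m : Type*} [Fintype m] [DecidableEq m]
    (A B : Matrix m m ℂ) : (A * B).charpoly = (B * A).charpoly := by
  apply Polynomial.eq_of_infinite_eval_eq
  apply Set.Infinite.mono (s := {(0:ℂ)}ᶜ)
  swap
  · exact Set.Finite.infinite_compl (Set.finite_singleton 0)
  intro z hz
  have hz : z ≠ 0 := hz
  simp only [Set.mem_setOf_eq]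
  rw [aux_eval_charpoly, aux_eval_charpoly]
  letI : Invertible (z • (1 : Matrix m m ℂ)) :=
    ⟨z⁻¹ • 1, by rw [smul_mul_smul_comm, inv_mul_cancel₀ hz, Matrix.one_mul, one_smul], by
      rw [smul_mul_smul_comm, mul_inv_cancel₀ hz, Matrix.one_mul, one_smul]⟩
  have hinv : ⅟(z • (1 : Matrix m m ℂ)) = z⁻¹ • 1 := rfl
  haveI : Invertible (1 : Matrix m m ℂ) := invertibleOne
  have h1 : (fromBlocks (z • (1 : Matrix m m ℂ)) A B 1).det
      = (z • (1:Matrix m m ℂ) - A * B).det := by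
    rw [Matrix.det_fromBlocks₂₂]
    simp
  have h2 : (fromBlocks (z • (1 : Matrix m m ℂ)) A B 1).det
      = (z • (1:Matrix m m ℂ) - B * A).det := by
    rw [Matrix.det_fromBlocks₁₁, hinv]
    have e1 : B * (z⁻¹ • (1 : Matrix m m ℂ)) * A = z⁻¹ • (B * A) := by
      rw [Matrix.mul_smul, Matrix.mul_one, Matrix.smul_mul]
    rw [e1, Matrix.det_smul, Matrix.det_one, mul_one]
    have e2 : z • ((1:Matrix m m ℂ) - z⁻¹ • (B * A)) = z • (1:Matrix m m ℂ) - B * A := by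
      rw [smul_sub, smul_smul, mul_inv_cancel₀ hz, one_smul]
    rw [← e2, Matrix.det_smul]
  rw [← h1, h2]

open Polynomial in
private lemma aux_charpoly_diagonal {m : Type*} [Fintype m] [DecidableEq m]
    (d : m → ℂ) : (diagonal d).charpoly = ∏ i, (X - C (d i)) := by
  rw [Matrix.charpoly]
  have h : charmatrix (diagonal d) = diagonal fun i => (X : ℂ[X]) - C (d i) := by
    ext i j
    by_cases h : i = j <;>
      simp [Matrix.charmatrix_apply, Matrix.diagonal_apply, h]
  rw [h, Matrix.det_diagonal]

private lemma aux_star_mul_self' {m : Type*} [Fintype m] [DecidableEq m]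
    {u : Matrix m m ℂ} (hu : u ∈ Matrix.unitaryGroup m ℂ) : uᴴ * u = 1 := by
  rw [← Matrix.star_eq_conjTranspose]
  exact Matrix.mem_unitaryGroup_iff'.mp hu

open Polynomial in
private lemma aux_charpoly_hermitian {m : Type*} [Fintype m] [DecidableEq m]
    {H : Matrix m m ℂ} (hH : H.IsHermitian) :
    H.charpoly = ∏ i, (X - C ((hH.eigenvalues i : ℝ) : ℂ)) := by
  conv_lhs => rw [hH.spectral_theorem, Unitary.conjStarAlgAut_apply]
  rw [aux_charpoly_mul_comm, ← Matrix.mul_assoc,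
    Matrix.mem_unitaryGroup_iff'.mp hH.eigenvectorUnitary.2, Matrix.one_mul,
    aux_charpoly_diagonal]
  rfl

private lemma aux_exists_perm_fin {α : Type*} [LinearOrder α] {N : ℕ}
    (f g : Fin N → α) (h : Finset.univ.val.map f = Finset.univ.val.map g) :
    ∃ σ : Equiv.Perm (Fin N), f = g ∘ σ := by
  have hperm : (List.ofFn f).Perm (List.ofFn g) := by
    rw [← Multiset.coe_eq_coe, ← Fin.univ_val_map, ← Fin.univ_val_map]
    exact h
  have h1 : List.ofFn (f ∘ Tuple.sort f) = List.ofFn (g ∘ Tuple.sort g) := by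
    refine (fun p s1 s2 => List.Perm.eq_of_sortedLE s1 s2 p) ?_ ?_ ?_
    · exact ((Tuple.sort f).ofFn_comp_perm f).trans
        (hperm.trans ((Tuple.sort g).ofFn_comp_perm g).symm)
    · exact (Tuple.monotone_sort f).sortedLE_ofFn
    · exact (Tuple.monotone_sort g).sortedLE_ofFn
  have h2 : f ∘ Tuple.sort f = g ∘ Tuple.sort g := List.ofFn_injective h1
  refine ⟨(Tuple.sort f).symm.trans (Tuple.sort g), funext fun i => ?_⟩
  have h3 := congrFun h2 ((Tuple.sort f).symm i)
  simpa using h3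

private lemma aux_exists_perm {α : Type*} [LinearOrder α] {m : Type*} [Fintype m] [DecidableEq m]
    (f g : m → α) (h : Finset.univ.val.map f = Finset.univ.val.map g) :
    ∃ σ : Equiv.Perm m, f = g ∘ σ := by
  set e := Fintype.equivFin m
  have hu : Finset.univ.val.map ⇑e.symm = Finset.univ.val := by simp
  have hfg : Finset.univ.val.map (f ∘ ⇑e.symm) = Finset.univ.val.map (g ∘ ⇑e.symm) := by
    rw [← Multiset.map_map, ← Multiset.map_map, hu, h]
  obtain ⟨σ', hσ'⟩ := aux_exists_perm_fin (f ∘ ⇑e.symm) (g ∘ ⇑e.symm) hfg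
  refine ⟨e.trans (σ'.trans e.symm), funext fun x => ?_⟩
  have h5 := congrFun hσ' (e x)
  simpa using h5

open Polynomial in
private lemma aux_eig_perm {m : Type*} [Fintype m] [DecidableEq m] (T : Matrix m m ℂ)
    (h1 : (T * Tᴴ).IsHermitian) (h2 : (Tᴴ * T).IsHermitian) :
    ∃ σ : Equiv.Perm m, h1.eigenvalues = h2.eigenvalues ∘ σ := by
  have hc := aux_charpoly_mul_comm T Tᴴ
  rw [aux_charpoly_hermitian h1, aux_charpoly_hermitian h2] at hc
  have key : ∀ (a : m → ℝ), (∏ i, ((X : ℂ[X]) - C ((a i : ℝ) : ℂ)))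
      = ((Finset.univ.val.map fun i => ((a i : ℝ) : ℂ)).map fun r => (X : ℂ[X]) - C r).prod := by
    intro a
    rw [Multiset.map_map, Finset.prod_eq_multiset_prod]
    rfl
  have hr : Finset.univ.val.map (fun i => ((h1.eigenvalues i : ℝ) : ℂ))
      = Finset.univ.val.map fun i => ((h2.eigenvalues i : ℝ) : ℂ) := by
    have r1 := Polynomial.roots_multiset_prod_X_sub_C
      (Finset.univ.val.map fun i => ((h1.eigenvalues i : ℝ) : ℂ))
    have r2 := Polynomial.roots_multiset_prod_X_sub_C
      (Finset.univ.val.map fun i => ((h2.eigenvalues i : ℝ) : ℂ))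
    rw [← r1, ← r2, ← key, ← key, hc]
  have hr' : Finset.univ.val.map h1.eigenvalues = Finset.univ.val.map h2.eigenvalues := by
    apply Multiset.map_injective (f := fun r : ℝ => (r : ℂ)) Complex.ofReal_injective
    rw [Multiset.map_map, Multiset.map_map]
    exact hr
  exact aux_exists_perm _ _ hr'

private lemma aux_perm_diag {m : Type*} [Fintype m] [DecidableEq m]
    (σ : Equiv.Perm m) (d : m → ℂ) :
    ∃ Z ∈ Matrix.unitaryGroup m ℂ, Z * diagonal d * Zᴴ = diagonal (d ∘ σ) := by
  refine ⟨(1 : Matrix m m ℂ).submatrix ⇑σ id, ?_, ?_⟩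
  · rw [Matrix.mem_unitaryGroup_iff, Matrix.star_eq_conjTranspose,
      Matrix.conjTranspose_submatrix, Matrix.conjTranspose_one]
    rw [show (id : m → m) = ⇑(Equiv.refl m) from rfl, Matrix.submatrix_mul_equiv,
      Matrix.one_mul, Matrix.submatrix_one_equiv]
  · ext i j
    by_cases h : i = j
    · subst h
      simp [Matrix.mul_apply, Matrix.submatrix_apply, Matrix.one_apply, Matrix.diagonal_apply,
        Matrix.conjTranspose_apply, apply_ite, Finset.sum_ite_eq, Finset.sum_ite_eq']
    · simp [Matrix.mul_apply, Matrix.submatrix_apply, Matrix.one_apply, Matrix.diagonal_apply,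
        Matrix.conjTranspose_apply, apply_ite, Finset.sum_ite_eq, Finset.sum_ite_eq', h,
        Ne.symm h]

private lemma aux_TTH_similar {m : Type*} [Fintype m] [DecidableEq m] (T : Matrix m m ℂ) :
    ∃ U ∈ Matrix.unitaryGroup m ℂ, T * Tᴴ = U * (Tᴴ * T) * Uᴴ := by
  have h1 := Matrix.isHermitian_mul_conjTranspose_self T
  have h2 := Matrix.isHermitian_conjTranspose_mul_self T
  obtain ⟨σ, hσ⟩ := aux_eig_perm T h1 h2
  obtain ⟨Z, hZmem, hZ⟩ := aux_perm_diag σ (RCLike.ofReal ∘ h2.eigenvalues)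
  have hU1mem : (h1.eigenvectorUnitary : Matrix m m ℂ) ∈ Matrix.unitaryGroup m ℂ :=
    h1.eigenvectorUnitary.2
  have hU2mem : (h2.eigenvectorUnitary : Matrix m m ℂ) ∈ Matrix.unitaryGroup m ℂ :=
    h2.eigenvectorUnitary.2
  have hU2 : (h2.eigenvectorUnitary : Matrix m m ℂ)ᴴ * (h2.eigenvectorUnitary : Matrix m m ℂ) = 1 :=
    aux_star_mul_self' hU2mem
  have hZD2 : Z * diagonal (RCLike.ofReal ∘ h2.eigenvalues) * Zᴴ
      = diagonal (RCLike.ofReal ∘ h1.eigenvalues) := by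
    rw [hZ, hσ]
    rfl
  refine ⟨(h1.eigenvectorUnitary : Matrix m m ℂ) * Z * (h2.eigenvectorUnitary : Matrix m m ℂ)ᴴ,
    ?_, ?_⟩
  · exact mul_mem (mul_mem hU1mem hZmem) (Unitary.star_mem hU2mem)
  · have key : ∀ u1 u2 d1 d2 : Matrix m m ℂ, u2ᴴ * u2 = 1 → Z * d2 * Zᴴ = d1 →
        T * Tᴴ = u1 * d1 * u1ᴴ → Tᴴ * T = u2 * d2 * u2ᴴ →
        T * Tᴴ = (u1 * Z * u2ᴴ) * (Tᴴ * T) * (u1 * Z * u2ᴴ)ᴴ := by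
      intro u1 u2 d1 d2 hu2 hzd e1 e2
      rw [e2, e1]
      simp only [Matrix.conjTranspose_mul, Matrix.conjTranspose_conjTranspose]
      simp only [Matrix.mul_assoc]
      have c2 : ∀ x : Matrix m m ℂ, u2ᴴ * (u2 * x) = x := fun x => by
        rw [← Matrix.mul_assoc, hu2, Matrix.one_mul]
      rw [c2, c2]
      have hfold : Z * (d2 * (Zᴴ * u1ᴴ)) = d1 * u1ᴴ := by
        rw [← Matrix.mul_assoc, ← Matrix.mul_assoc, hzd]
      rw [hfold]
    apply key _ _ _ _ hU2 hZD2
    · have h := h1.spectral_theorem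
      rwa [Unitary.conjStarAlgAut_apply, Matrix.star_eq_conjTranspose] at h
    · have h := h2.spectral_theorem
      rwa [Unitary.conjStarAlgAut_apply, Matrix.star_eq_conjTranspose] at h

private lemma aux_left_block {l : Type*} [Fintype l] [DecidableEq l]
    (P : Matrix (l ⊕ l) l ℂ) :
    ∃ U ∈ Matrix.unitaryGroup (l ⊕ l) ℂ,
      P * Pᴴ = U * fromBlocks (Pᴴ * P) 0 0 0 * Uᴴ := by
  obtain ⟨U, hUmem, hU⟩ := aux_TTH_similar (fromCols P (0 : Matrix (l ⊕ l) l ℂ))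
  have hct : (fromCols P (0 : Matrix (l ⊕ l) l ℂ))ᴴ = fromRows Pᴴ 0 := by
    rw [Matrix.conjTranspose_fromCols_eq_fromRows_conjTranspose, Matrix.conjTranspose_zero]
  rw [hct, Matrix.fromCols_mul_fromRows, Matrix.fromRows_mul_fromCols] at hU
  simp only [Matrix.mul_zero, Matrix.zero_mul, add_zero] at hU
  exact ⟨U, hUmem, hU⟩

private lemma aux_right_block {l : Type*} [Fintype l] [DecidableEq l]
    (Q : Matrix (l ⊕ l) l ℂ) :
    ∃ U ∈ Matrix.unitaryGroup (l ⊕ l) ℂ,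
      Q * Qᴴ = U * fromBlocks 0 0 0 (Qᴴ * Q) * Uᴴ := by
  obtain ⟨U, hUmem, hU⟩ := aux_TTH_similar (fromCols (0 : Matrix (l ⊕ l) l ℂ) Q)
  have hct : (fromCols (0 : Matrix (l ⊕ l) l ℂ) Q)ᴴ = fromRows 0 Qᴴ := by
    rw [Matrix.conjTranspose_fromCols_eq_fromRows_conjTranspose, Matrix.conjTranspose_zero]
  rw [hct, Matrix.fromCols_mul_fromRows, Matrix.fromRows_mul_fromCols] at hU
  simp only [Matrix.mul_zero, Matrix.zero_mul, zero_add] at hU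
  exact ⟨U, hUmem, hU⟩

theorem decomposition_imaginary_part (n : ℕ)
    (A B : Matrix (Fin n) (Fin n) ℂ) (X : Matrix (Fin n) (Fin n) ℂ)
    (hM : (fromBlocks A X Xᴴ B).PosSemidef) :
    ∃ U V : Matrix.unitaryGroup (Fin n ⊕ Fin n) ℂ,
      fromBlocks A X Xᴴ B =
        (U : Matrix _ _ ℂ) *
          fromBlocks ((1/2 : ℂ) • (A + B) + (1/(2 * Complex.I)) • (X - Xᴴ)) 0 0 0 *
          (U : Matrix _ _ ℂ)ᴴ +
        (V : Matrix _ _ ℂ) *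
          fromBlocks 0 0 0 ((1/2 : ℂ) • (A + B) - (1/(2 * Complex.I)) • (X - Xᴴ)) *
          (V : Matrix _ _ ℂ)ᴴ := by
  classical
  set s : ℂ := (((Real.sqrt 2)⁻¹ : ℝ) : ℂ) with hsdef
  have hs2 : s * s = 1/2 := by
    rw [hsdef]
    norm_cast
    rw [← mul_inv, Real.mul_self_sqrt (by norm_num)]
    norm_num
  set W : Matrix (Fin n ⊕ Fin n) (Fin n ⊕ Fin n) ℂ :=
    fromBlocks (s•1) (s•1) ((-(s*Complex.I))•1) ((s*Complex.I)•1) with hWdef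
  have hWh : Wᴴ = fromBlocks (s•1) ((s*Complex.I)•1) (s•1) ((-(s*Complex.I))•1) := by
    rw [hWdef, Matrix.fromBlocks_conjTranspose]
    simp [Matrix.conjTranspose_smul, hsdef, Complex.conj_ofReal, _root_.map_mul, Complex.conj_I]
  have hW1 : W * Wᴴ = 1 := by
    rw [hWh, hWdef, Matrix.fromBlocks_multiply,
      show (1 : Matrix (Fin n ⊕ Fin n) (Fin n ⊕ Fin n) ℂ) = fromBlocks 1 0 0 1 from
        Matrix.fromBlocks_one.symm, Matrix.fromBlocks_inj]
    refine ⟨?_, ?_, ?_, ?_⟩ <;>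
      simp only [Matrix.smul_mul, Matrix.mul_smul, Matrix.one_mul, Matrix.mul_one, smul_smul] <;>
      match_scalars
    · linear_combination 2 * hs2
    · ring
    · ring
    · linear_combination (-2) * Complex.I^2 * hs2 - Complex.I_sq
  have hWmem : W ∈ Matrix.unitaryGroup (Fin n ⊕ Fin n) ℂ := by
    rw [Matrix.mem_unitaryGroup_iff, Matrix.star_eq_conjTranspose]
    exact hW1
  set M : Matrix (Fin n ⊕ Fin n) (Fin n ⊕ Fin n) ℂ := fromBlocks A X Xᴴ B with hMdef
  have hN : (Wᴴ * M * W).PosSemidef := hM.conjTranspose_mul_mul_same W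
  have hMN : M = W * (Wᴴ * M * W) * Wᴴ := by
    rw [← Matrix.mul_assoc, ← Matrix.mul_assoc, hW1, Matrix.one_mul, Matrix.mul_assoc, hW1,
      Matrix.mul_one]
  have hN11 : (Wᴴ * M * W).toBlocks₁₁
      = (1/2 : ℂ) • (A + B) + (1/(2 * Complex.I)) • (X - Xᴴ) := by
    rw [hWh, hMdef, hWdef, Matrix.fromBlocks_multiply, Matrix.fromBlocks_multiply,
      Matrix.toBlocks_fromBlocks₁₁]
    simp only [Matrix.smul_mul, Matrix.mul_smul, Matrix.one_mul, Matrix.mul_one, smul_smul]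
    match_scalars <;> field_simp
    · linear_combination 2 * hs2
    · linear_combination 2 * Complex.I^2 * hs2 + Complex.I_sq
    · linear_combination (-2) * Complex.I^2 * hs2 - Complex.I_sq
    · linear_combination (-2) * Complex.I^2 * hs2 - Complex.I_sq
  have hN22 : (Wᴴ * M * W).toBlocks₂₂
      = (1/2 : ℂ) • (A + B) - (1/(2 * Complex.I)) • (X - Xᴴ) := by
    rw [hWh, hMdef, hWdef, Matrix.fromBlocks_multiply, Matrix.fromBlocks_multiply,
      Matrix.toBlocks_fromBlocks₂₂]
    simp only [Matrix.smul_mul, Matrix.mul_smul, Matrix.one_mul, Matrix.mul_one, smul_smul]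
    match_scalars <;> field_simp
    · linear_combination 2 * hs2
    · linear_combination (-2) * Complex.I^2 * hs2 - Complex.I_sq
    · linear_combination 2 * Complex.I^2 * hs2 + Complex.I_sq
    · linear_combination (-2) * Complex.I^2 * hs2 - Complex.I_sq
  -- square root decomposition
  open scoped MatrixOrder in
  set K : Matrix (Fin n ⊕ Fin n) (Fin n ⊕ Fin n) ℂ := CFC.sqrt (Wᴴ * M * W) with hKdef
  open scoped MatrixOrder in
  have hKK : K * K = Wᴴ * M * W := CFC.sqrt_mul_sqrt_self _ hN.nonneg
  open scoped MatrixOrder in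
  have hKherm : Kᴴ = K := (CFC.sqrt_nonneg (Wᴴ * M * W)).posSemidef.1
  set P := K.toCols₁ with hPdef
  set Q := K.toCols₂ with hQdef
  have hKc : fromCols P Q = K := fromCols_toCols K
  have hKct : (fromCols P Q)ᴴ = fromRows Pᴴ Qᴴ :=
    Matrix.conjTranspose_fromCols_eq_fromRows_conjTranspose P Q
  have hsum : P * Pᴴ + Q * Qᴴ = Wᴴ * M * W := by
    rw [← Matrix.fromCols_mul_fromRows, ← hKct, hKc, hKherm, hKK]
  have hblocks : fromBlocks (Pᴴ * P) (Pᴴ * Q) (Qᴴ * P) (Qᴴ * Q) = Wᴴ * M * W := by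
    rw [← Matrix.fromRows_mul_fromCols, ← hKct, hKc, hKherm, hKK]
  have hPP : Pᴴ * P = (1/2 : ℂ) • (A + B) + (1/(2 * Complex.I)) • (X - Xᴴ) := by
    have h := congrArg Matrix.toBlocks₁₁ hblocks
    rwa [Matrix.toBlocks_fromBlocks₁₁, hN11] at h
  have hQQ : Qᴴ * Q = (1/2 : ℂ) • (A + B) - (1/(2 * Complex.I)) • (X - Xᴴ) := by
    have h := congrArg Matrix.toBlocks₂₂ hblocks
    rwa [Matrix.toBlocks_fromBlocks₂₂, hN22] at h
  obtain ⟨U1, hU1mem, hU1⟩ := aux_left_block P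
  obtain ⟨V1, hV1mem, hV1⟩ := aux_right_block Q
  refine ⟨⟨W * U1, mul_mem hWmem hU1mem⟩, ⟨W * V1, mul_mem hWmem hV1mem⟩, ?_⟩
  show M = (W * U1) * fromBlocks ((1/2 : ℂ) • (A + B) + (1/(2 * Complex.I)) • (X - Xᴴ)) 0 0 0
      * (W * U1)ᴴ
    + (W * V1) * fromBlocks 0 0 0 ((1/2 : ℂ) • (A + B) - (1/(2 * Complex.I)) • (X - Xᴴ))
      * (W * V1)ᴴ
  rw [← hPP, ← hQQ]
  calc M = W * (Wᴴ * M * W) * Wᴴ := hMN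
    _ = W * (P * Pᴴ + Q * Qᴴ) * Wᴴ := by rw [hsum]
    _ = W * (P * Pᴴ) * Wᴴ + W * (Q * Qᴴ) * Wᴴ := by rw [Matrix.mul_add, Matrix.add_mul]
    _ = (W * U1) * fromBlocks (Pᴴ * P) 0 0 0 * (W * U1)ᴴ
        + (W * V1) * fromBlocks 0 0 0 (Qᴴ * Q) * (W * V1)ᴴ := by
      rw [hU1, hV1]
      simp only [Matrix.conjTranspose_mul, Matrix.mul_assoc]
end

section
/- Let M = [[A, X], [X*, B]] ∈ M_{2n}^+ be positive semi-definite with all blocks of size n×n. Then (A+B)/2 + Im(X) ≥ 0 and (A+B)/2 − Im(X) ≥ 0, where Im(X) = (X − X*)/(2i). -/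
open Matrix ComplexOrder

theorem mean_pm_imaginary_part_psd (n : ℕ)
    (A B : Matrix (Fin n) (Fin n) ℂ) (X : Matrix (Fin n) (Fin n) ℂ)
    (hM : (fromBlocks A X Xᴴ B).PosSemidef) :
    ((1/2 : ℂ) • (A + B) + (1/(2 * Complex.I)) • (X - Xᴴ)).PosSemidef ∧
    ((1/2 : ℂ) • (A + B) - (1/(2 * Complex.I)) • (X - Xᴴ)).PosSemidef := by
  obtain ⟨hHerm, hpos⟩ := posSemidef_iff_dotProduct_mulVec.mp hM
  have hblocks : fromBlocks Aᴴ X Xᴴ Bᴴ = fromBlocks A X Xᴴ B := by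
    have h := hHerm
    rwa [Matrix.IsHermitian, fromBlocks_conjTranspose, conjTranspose_conjTranspose] at h
  have hA : Aᴴ = A := by
    have := congrArg Matrix.toBlocks₁₁ hblocks; simpa using this
  have hB : Bᴴ = B := by
    have := congrArg Matrix.toBlocks₂₂ hblocks; simpa using this
  have hc : (1/(2 * Complex.I) : ℂ) = -(Complex.I/2) := by
    rw [div_eq_iff (by simp [Complex.I_ne_zero] : (2*Complex.I : ℂ) ≠ 0)]
    ring_nf
    simp [Complex.I_sq]
  have half_nonneg : (0:ℂ) ≤ 1/2 := by rw [Complex.le_def]; norm_num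
  have quad : ∀ (c : ℂ) (x : Fin n → ℂ),
      0 ≤ star x ⬝ᵥ (A *ᵥ x) + c * (star x ⬝ᵥ (X *ᵥ x))
        + star c * (star x ⬝ᵥ (Xᴴ *ᵥ x)) + (star c * c) * (star x ⬝ᵥ (B *ᵥ x)) := by
    intro c x
    have h := hpos (Sum.elim x (c • x))
    simp only [Function.star_sumElim, fromBlocks_mulVec, sumElim_dotProduct_sumElim,
      mulVec_smul, dotProduct_smul, smul_dotProduct, dotProduct_add, smul_eq_mul,
      Sum.elim_comp_inl, Sum.elim_comp_inr, star_smul, Pi.smul_apply] at h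
    convert h using 1
    ring
  have herm1 : ((1/2 : ℂ) • (A + B) + (1/(2 * Complex.I)) • (X - Xᴴ)).IsHermitian := by
    rw [hc]
    unfold Matrix.IsHermitian
    simp only [conjTranspose_add, conjTranspose_smul, conjTranspose_sub, hA, hB,
      conjTranspose_conjTranspose, Complex.star_def, map_neg, map_div₀, Complex.conj_I, map_ofNat, _root_.map_one]
    module
  have herm2 : ((1/2 : ℂ) • (A + B) - (1/(2 * Complex.I)) • (X - Xᴴ)).IsHermitian := by
    rw [hc]
    unfold Matrix.IsHermitian
    simp only [conjTranspose_sub, conjTranspose_add, conjTranspose_smul, hA, hB,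
      conjTranspose_conjTranspose, Complex.star_def, map_neg, map_div₀, Complex.conj_I, map_ofNat, _root_.map_one]
    module
  constructor
  · refine posSemidef_iff_dotProduct_mulVec.mpr ⟨herm1, fun x => ?_⟩
    have h := quad (-Complex.I) x
    simp only [star_neg, Complex.star_def, Complex.conj_I, neg_neg] at h
    have h2 := mul_nonneg half_nonneg h
    rw [hc]
    calc (0:ℂ) ≤ _ := h2
    _ = star x ⬝ᵥ (((1/2 : ℂ) • (A + B) + (-(Complex.I/2)) • (X - Xᴴ)) *ᵥ x) := by
        simp only [add_mulVec, sub_mulVec, neg_smul, neg_mulVec, smul_mulVec,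
          dotProduct_add, dotProduct_sub, dotProduct_neg, dotProduct_smul, smul_eq_mul]
        ring_nf
        rw [Complex.I_sq]
        ring
  · refine posSemidef_iff_dotProduct_mulVec.mpr ⟨herm2, fun x => ?_⟩
    have h := quad Complex.I x
    simp only [Complex.star_def, Complex.conj_I] at h
    have h2 := mul_nonneg half_nonneg h
    rw [hc]
    calc (0:ℂ) ≤ _ := h2
    _ = star x ⬝ᵥ (((1/2 : ℂ) • (A + B) - (-(Complex.I/2)) • (X - Xᴴ)) *ᵥ x) := by
        simp only [add_mulVec, sub_mulVec, neg_smul, neg_mulVec, smul_mulVec,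
          dotProduct_add, dotProduct_sub, dotProduct_neg, dotProduct_smul, smul_eq_mul]
        ring_nf
        rw [Complex.I_sq]
        ring
end

section
/- Let M = [[A, X], [X*, B]] be a 2n×2n positive semi-definite matrix in n×n blocks, where X is normal, X* commutes with A, and X commutes with B. Then ‖M‖ ≤ ‖A + B‖ for every unitarily invariant norm (identifying A+B with (A+B) ⊕ 0). -/
open Matrix ComplexOrder

section Aux

open scoped Matrix.Norms.L2Operator in
/-- The (scoped) `L2` operator norm makes square complex matrices a C⋆-algebra. -/
@[reducible] noncomputable def matCStarAlg (m : Type*) [Fintype m] [DecidableEq m] :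
    CStarAlgebra (Matrix m m ℂ) where
  toNormedRing := Matrix.instL2OpNormedRing
  toStarRing := inferInstance
  toCompleteSpace := inferInstance
  toCStarRing := Matrix.instCStarRing
  toNormedAlgebra := Matrix.instL2OpNormedAlgebra
  toStarModule := inferInstance

lemma Commute.aeval_left' {R A : Type*} [CommSemiring R] [Semiring A] [Algebra R A]
    {a b : A} (h : Commute a b) (p : Polynomial R) : Commute (Polynomial.aeval a p) b := by
  induction p using Polynomial.induction_on' with
  | add p q hp hq => simpa [map_add] using hp.add_left hq
  | monomial k c =>
    simp only [Polynomial.aeval_monomial]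
    exact (Algebra.commute_algebraMap_left c b).mul_left (h.pow_left k)

end Aux

lemma polar_similarity {m : Type*} [Fintype m] [DecidableEq m] (K : Matrix m m ℂ) :
    ∃ U ∈ Matrix.unitaryGroup m ℂ, K * Kᴴ = U * (Kᴴ * K) * star U := by
  classical
  have hsd : (Kᴴ * K).PosSemidef := Matrix.posSemidef_conjTranspose_mul_self K
  have hH : (Kᴴ * K).IsHermitian := hsd.1
  set Q : Matrix m m ℂ := (hH.eigenvectorUnitary : Matrix m m ℂ) with hQdef
  have hQ : Q ∈ Matrix.unitaryGroup m ℂ := (hH.eigenvectorUnitary).2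
  set d : m → ℝ := hH.eigenvalues with hddef
  have hdnn : ∀ i, 0 ≤ d i := fun i => hsd.eigenvalues_nonneg i
  have hspec : Kᴴ * K = Q * Matrix.diagonal (RCLike.ofReal ∘ d) * star Q := hH.spectral_theorem
  set L : Matrix m m ℂ := K * Q with hLdef
  have hLL : Lᴴ * L = Matrix.diagonal (RCLike.ofReal ∘ d) := by
    have h1 : star Q * (Kᴴ * K) * Q = Matrix.diagonal (RCLike.ofReal ∘ d) :=
      by have := hH.conjStarAlgAut_star_eigenvectorUnitary
         rwa [Unitary.conjStarAlgAut_star_apply] at this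
    calc Lᴴ * L = star Q * (Kᴴ * K) * Q := by
          rw [hLdef, Matrix.conjTranspose_mul, Matrix.star_eq_conjTranspose]
          noncomm_ring
      _ = _ := h1
  -- columns of L
  set col : m → EuclideanSpace ℂ m := fun j => (WithLp.equiv 2 (m → ℂ)).symm (fun i => L i j)
    with hcoldef
  have hinner : ∀ j k, (inner ℂ (col j) (col k) : ℂ) = if j = k then (d j : ℂ) else 0 := by
    intro j k
    have : (inner ℂ (col j) (col k) : ℂ) = (Lᴴ * L) j k := by
      simp [hcoldef, PiLp.inner_apply, RCLike.inner_apply, Matrix.mul_apply,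
        Matrix.conjTranspose_apply, WithLp.equiv_symm_apply, PiLp.toLp_apply, mul_comm]
    rw [this, hLL, Matrix.diagonal_apply]
    by_cases h : j = k <;> simp [h]
  set s : Set m := {j | d j ≠ 0} with hsdef
  set v : m → EuclideanSpace ℂ m := fun j => (((Real.sqrt (d j) : ℝ) : ℂ))⁻¹ • col j with hvdef
  have hv : Orthonormal ℂ (s.restrict v) := by
    rw [orthonormal_iff_ite]
    rintro ⟨j, hj⟩ ⟨k, hk⟩
    simp only [Set.restrict, Set.domRestrict_apply, hvdef, inner_smul_left, inner_smul_right, hinner]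
    by_cases hjk : j = k
    · subst hjk
      simp only [if_pos rfl, Subtype.mk.injEq, map_inv₀, Complex.conj_ofReal]
      have hd : d j ≠ 0 := hj
      have hsq : (Real.sqrt (d j) : ℝ) * Real.sqrt (d j) = d j := Real.mul_self_sqrt (hdnn j)
      have hsne : (Real.sqrt (d j) : ℝ) ≠ 0 := by
        intro h0
        apply hd
        rw [← hsq, h0, mul_zero]
      simp only [if_true]
      norm_cast
      field_simp
      rw [Real.sq_sqrt (hdnn j)]
    · have : (⟨j, hj⟩ : s) ≠ ⟨k, hk⟩ := by simpa using hjk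
      rw [if_neg hjk, if_neg this]
      simp
  have card : Module.finrank ℂ (EuclideanSpace ℂ m) = Fintype.card m := finrank_euclideanSpace
  obtain ⟨b, hb⟩ := hv.exists_orthonormalBasis_extension_of_card_eq card
  set W : Matrix m m ℂ := Matrix.of fun i j => b j i with hWdef
  have hW : W ∈ Matrix.unitaryGroup m ℂ := by
    rw [Matrix.mem_unitaryGroup_iff']
    ext j k
    have hbo := orthonormal_iff_ite.mp b.orthonormal j k
    simp only [PiLp.inner_apply, RCLike.inner_apply] at hbo
    simp only [Matrix.star_eq_conjTranspose, Matrix.mul_apply, Matrix.conjTranspose_apply,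
      hWdef, Matrix.of_apply, Matrix.one_apply]
    rw [← hbo]
    simp [Complex.star_def, mul_comm]
  set Δ : Matrix m m ℂ := Matrix.diagonal (fun j => ((Real.sqrt (d j) : ℝ) : ℂ)) with hΔdef
  have hLW : L = W * Δ := by
    ext i j
    rw [hΔdef, Matrix.mul_diagonal]
    by_cases hj : d j = 0
    · have hz : ∀ i, L i j = 0 := by
        have hdj : ∑ i, Complex.normSq (L i j) = 0 := by
          have h1 : (Lᴴ * L) j j = (d j : ℂ) := by
            rw [hLL]; simp [Matrix.diagonal_apply]
          have h2 : (Lᴴ * L) j j = ∑ i, (Complex.normSq (L i j) : ℂ) := by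
            simp only [Matrix.mul_apply, Matrix.conjTranspose_apply]
            congr 1
            ext i
            rw [Complex.star_def, mul_comm, Complex.mul_conj]
          rw [h1, hj] at h2
          exact_mod_cast h2.symm
        intro i
        have := (Finset.sum_eq_zero_iff_of_nonneg (fun i _ => Complex.normSq_nonneg (L i j))).mp
          hdj i (Finset.mem_univ i)
        exact Complex.normSq_eq_zero.mp this
      rw [hz i, hj]
      simp
    · have hjs : j ∈ s := hj
      have hWv : W i j = v j i := by rw [hWdef]; simp [hb j hjs]
      have hsne : Real.sqrt (d j) ≠ 0 := by
        intro h0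
        apply hj
        rw [← Real.mul_self_sqrt (hdnn j), h0, mul_zero]
      rw [hWv, hvdef]
      simp only [PiLp.smul_apply, smul_eq_mul, hcoldef, WithLp.equiv_symm_apply, PiLp.toLp_apply]
      rw [mul_comm, ← mul_assoc]
      rw [mul_inv_cancel₀ (by exact_mod_cast hsne), one_mul]
  have hΔH : Δᴴ = Δ := by
    have h : (star fun j => ((Real.sqrt (d j) : ℝ) : ℂ)) = fun j => ((Real.sqrt (d j) : ℝ) : ℂ) := by
      funext j
      rw [Pi.star_apply, Complex.star_def, Complex.conj_ofReal]
    rw [hΔdef, Matrix.diagonal_conjTranspose, h]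
  have hΔΔ : Δ * Δ = Matrix.diagonal (RCLike.ofReal ∘ d) := by
    have h : (fun j => ((Real.sqrt (d j) : ℝ) : ℂ) * ((Real.sqrt (d j) : ℝ) : ℂ))
        = RCLike.ofReal ∘ d := by
      funext j
      rw [← Complex.ofReal_mul, Real.mul_self_sqrt (hdnn j)]
      rfl
    rw [hΔdef, Matrix.diagonal_mul_diagonal, h]
  have hKK : K * Kᴴ = W * Matrix.diagonal (RCLike.ofReal ∘ d) * Wᴴ := by
    have hK : K = L * star Q := by
      rw [hLdef, mul_assoc, Matrix.mem_unitaryGroup_iff.mp hQ, mul_one]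
    rw [hK]
    rw [Matrix.conjTranspose_mul, Matrix.star_eq_conjTranspose, Matrix.conjTranspose_conjTranspose]
    calc L * Qᴴ * (Q * Lᴴ) = L * (Qᴴ * Q) * Lᴴ := by noncomm_ring
      _ = L * Lᴴ := by
          rw [← Matrix.star_eq_conjTranspose, Matrix.mem_unitaryGroup_iff'.mp hQ, mul_one]
      _ = W * Matrix.diagonal (RCLike.ofReal ∘ d) * Wᴴ := by
          rw [hLW, Matrix.conjTranspose_mul, hΔH, ← hΔΔ]
          noncomm_ring
  refine ⟨W * star Q, mul_mem hW (Unitary.star_mem hQ), ?_⟩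
  rw [hspec, hKK]
  have h1 : star (W * star Q) = Q * star W := by
    rw [StarMul.star_mul, star_star]
  rw [h1]
  have hQQ : star Q * Q = 1 := Matrix.mem_unitaryGroup_iff'.mp hQ
  calc W * Matrix.diagonal (RCLike.ofReal ∘ d) * Wᴴ
      = W * (1 : Matrix m m ℂ) * Matrix.diagonal (RCLike.ofReal ∘ d) * (1 : Matrix m m ℂ) * star W := by
        rw [Matrix.star_eq_conjTranspose]; noncomm_ring
    _ = W * (star Q * Q) * Matrix.diagonal (RCLike.ofReal ∘ d) * (star Q * Q) * star W := by
        rw [hQQ]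
    _ = W * star Q * (Q * Matrix.diagonal (RCLike.ofReal ∘ d) * star Q) * (Q * star W) := by
        noncomm_ring

lemma exists_phase {m : Type*} [Fintype m] [DecidableEq m] (X B : Matrix m m ℂ)
    (hX : X * Xᴴ = Xᴴ * X) (hcommB : X * B = B * X) :
    ∃ Φ : Matrix m m ℂ, Φ ∈ Matrix.unitaryGroup m ℂ ∧ (X * Φ)ᴴ = X * Φ ∧ Φ * B = B * Φ := by
  classical
  letI : CStarAlgebra (Matrix m m ℂ) := matCStarAlg m
  haveI hXn : IsStarNormal X := ⟨by
    rw [Commute, SemiconjBy, Matrix.star_eq_conjTranspose, hX.symm]⟩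
  have hcont : ∀ f : ℂ → ℂ, ContinuousOn f (spectrum ℂ X) := by
    intro f
    have hfin : (spectrum ℂ X).Finite := X.finite_spectrum
    rw [continuousOn_iff_continuous_restrict]
    haveI : Finite (spectrum ℂ X) := hfin.to_subtype
    exact continuous_of_discreteTopology
  set g : ℂ → ℂ := fun z => if z = 0 then 1 else (starRingEnd ℂ) z / (‖z‖ : ℂ) with hgdef
  have hg1 : ∀ z, (starRingEnd ℂ) (g z) * g z = 1 := by
    intro z
    by_cases hz : z = 0
    · simp [hgdef, hz]
    · have habs : (‖z‖ : ℂ) ≠ 0 := by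
        simpa using norm_ne_zero_iff.mpr hz
      simp only [hgdef, if_neg hz, map_div₀, Complex.conj_conj, Complex.conj_ofReal]
      rw [div_mul_div_comm, Complex.mul_conj]
      rw [div_eq_one_iff_eq (mul_ne_zero habs habs)]
      norm_cast
      rw [Complex.normSq_eq_norm_sq, sq]
  set Φ : Matrix m m ℂ := cfc g X with hΦdef
  have hstar : star Φ = cfc (fun z => (starRingEnd ℂ) (g z)) X := by
    rw [hΦdef]
    exact (cfc_star g X).symm
  have hsΦΦ : star Φ * Φ = 1 := by
    rw [hstar, hΦdef, ← cfc_mul _ _ X (hcont _) (hcont _)]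
    have : (fun z => (starRingEnd ℂ) (g z) * g z) = fun _ => (1 : ℂ) := funext hg1
    rw [this]
    exact cfc_const_one ℂ X
  have hΦsΦ : Φ * star Φ = 1 := by
    rw [hstar, hΦdef, ← cfc_mul _ _ X (hcont _) (hcont _)]
    have : (fun z => g z * (starRingEnd ℂ) (g z)) = fun _ => (1 : ℂ) := by
      funext z; rw [mul_comm]; exact hg1 z
    rw [this]
    exact cfc_const_one ℂ X
  have hΦu : Φ ∈ Matrix.unitaryGroup m ℂ := by
    rw [Matrix.mem_unitaryGroup_iff]
    exact hΦsΦ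
  have hXΦ : X * Φ = cfc (fun z => (‖z‖ : ℂ)) X := by
    conv_lhs => rw [← cfc_id ℂ X, hΦdef]
    rw [← cfc_mul _ _ X (hcont _) (hcont _)]
    apply cfc_congr
    intro z _
    by_cases hz : z = 0
    · simp [hgdef, hz]
    · simp only [hgdef, id_eq, if_neg hz]
      have habs : (‖z‖ : ℂ) ≠ 0 := by
        simpa using norm_ne_zero_iff.mpr hz
      rw [mul_div_assoc', Complex.mul_conj, ← Complex.sq_norm, sq]
      field_simp
      norm_cast
  have hherm : (X * Φ)ᴴ = X * Φ := by
    rw [← Matrix.star_eq_conjTranspose, hXΦ, ← cfc_star _ X]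
    apply cfc_congr
    intro z _
    simp [Complex.conj_ofReal]
  -- commutation with B via polynomial interpolation
  have hfin : (spectrum ℂ X).Finite := X.finite_spectrum
  set p : Polynomial ℂ := Lagrange.interpolate hfin.toFinset id g with hpdef
  have hΦp : Φ = Polynomial.aeval X p := by
    rw [hΦdef, ← cfc_polynomial p X]
    apply cfc_congr
    intro z hz
    have hz' : z ∈ hfin.toFinset := hfin.mem_toFinset.mpr hz
    exact (Lagrange.eval_interpolate_at_node g (Set.injOn_id _) hz').symm
  have hΦB : Φ * B = B * Φ := by
    rw [hΦp]
    exact (Commute.aeval_left' hcommB p)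
  exact ⟨Φ, hΦu, hherm, hΦB⟩

theorem norm_le_of_normal_comm (n : ℕ)
    (A B X : Matrix (Fin n) (Fin n) ℂ)
    (hX : X * Xᴴ = Xᴴ * X)
    (hM : (fromBlocks A X Xᴴ B).PosSemidef)
    (hcommA : Xᴴ * A = A * Xᴴ)
    (hcommB : X * B = B * X)
    (f : Matrix (Fin n ⊕ Fin n) (Fin n ⊕ Fin n) ℂ → ℝ)
    (hf_nonneg : ∀ T, 0 ≤ f T)
    (hf_smul : ∀ (c : ℂ) T, f (c • T) = ‖c‖ * f T)
    (hf_add : ∀ S T, f (S + T) ≤ f S + f T)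
    (hf_inv : ∀ (T : Matrix (Fin n ⊕ Fin n) (Fin n ⊕ Fin n) ℂ)
      (U V : Matrix.unitaryGroup (Fin n ⊕ Fin n) ℂ),
      f ((U : Matrix _ _ ℂ) * T * (V : Matrix _ _ ℂ)) = f T) :
    f (fromBlocks A X Xᴴ B) ≤ f (fromBlocks (A + B) 0 0 0) := by
  classical
  obtain ⟨Φ, hΦu, hXΦ, hΦB⟩ := exists_phase X B hX hcommB
  have hΦHΦ : Φᴴ * Φ = 1 := by
    rw [← Matrix.star_eq_conjTranspose]
    exact Matrix.mem_unitaryGroup_iff'.mp hΦu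
  have hΦΦH : Φ * Φᴴ = 1 := by
    rw [← Matrix.star_eq_conjTranspose]
    exact Matrix.mem_unitaryGroup_iff.mp hΦu
  set M : Matrix (Fin n ⊕ Fin n) (Fin n ⊕ Fin n) ℂ := fromBlocks A X Xᴴ B with hMdef
  set N : Matrix (Fin n ⊕ Fin n) (Fin n ⊕ Fin n) ℂ := fromBlocks (A + B) 0 0 0 with hNdef
  set T : Matrix (Fin n ⊕ Fin n) (Fin n ⊕ Fin n) ℂ := (open scoped MatrixOrder in CFC.sqrt M) with hTdef
  have hTT : T * T = M := by
    open scoped MatrixOrder in exact CFC.sqrt_mul_sqrt_self M (Matrix.nonneg_iff_posSemidef.mpr hM)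
  have hTh : Tᴴ = T := by
    open scoped MatrixOrder in exact (Matrix.nonneg_iff_posSemidef.mp (CFC.sqrt_nonneg M)).1
  set F₁ : Matrix (Fin n ⊕ Fin n) (Fin n ⊕ Fin n) ℂ :=
    fromBlocks 1 0 (Complex.I • Φ) 0 with hF₁def
  set F₂ : Matrix (Fin n ⊕ Fin n) (Fin n ⊕ Fin n) ℂ :=
    fromBlocks 1 0 ((-Complex.I) • Φ) 0 with hF₂def
  have hF₁H : F₁ᴴ = fromBlocks 1 ((-Complex.I) • Φᴴ) 0 0 := by
    rw [hF₁def, Matrix.fromBlocks_conjTranspose]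
    simp [Matrix.conjTranspose_smul, Complex.star_def, Complex.conj_I]
  have hF₂H : F₂ᴴ = fromBlocks 1 (Complex.I • Φᴴ) 0 0 := by
    rw [hF₂def, Matrix.fromBlocks_conjTranspose]
    simp [Matrix.conjTranspose_smul, Complex.star_def, Complex.conj_I]
  have hFF : F₁ * F₁ᴴ + F₂ * F₂ᴴ = (2 : ℂ) • 1 := by
    rw [hF₁H, hF₂H, hF₁def, hF₂def, Matrix.fromBlocks_multiply, Matrix.fromBlocks_multiply,
      Matrix.fromBlocks_add]
    have e1 : (Complex.I • Φ) * ((-Complex.I) • Φᴴ) = Φ * Φᴴ := by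
      rw [Matrix.smul_mul, Matrix.mul_smul, smul_smul]
      norm_num [Complex.I_mul_I]
    have e2 : ((-Complex.I) • Φ) * (Complex.I • Φᴴ) = Φ * Φᴴ := by
      rw [Matrix.smul_mul, Matrix.mul_smul, smul_smul]
      norm_num [Complex.I_mul_I]
    rw [e1, e2, hΦΦH]
    have h2 : ((2 : ℂ) • (1 : Matrix (Fin n ⊕ Fin n) (Fin n ⊕ Fin n) ℂ))
        = fromBlocks ((2:ℂ) • 1) 0 0 ((2:ℂ) • 1) := by
      rw [← Matrix.fromBlocks_one, Matrix.fromBlocks_smul, smul_zero]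
    rw [h2]
    congr 1 <;> simp [two_smul]
  set K₁ : Matrix (Fin n ⊕ Fin n) (Fin n ⊕ Fin n) ℂ := T * F₁ with hK₁def
  set K₂ : Matrix (Fin n ⊕ Fin n) (Fin n ⊕ Fin n) ℂ := T * F₂ with hK₂def
  have hsum : K₁ * K₁ᴴ + K₂ * K₂ᴴ = (2 : ℂ) • M := by
    rw [hK₁def, hK₂def, Matrix.conjTranspose_mul, Matrix.conjTranspose_mul, hTh]
    calc T * F₁ * (F₁ᴴ * T) + T * F₂ * (F₂ᴴ * T)
        = T * (F₁ * F₁ᴴ + F₂ * F₂ᴴ) * T := by noncomm_ring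
      _ = T * ((2:ℂ) • 1) * T := by rw [hFF]
      _ = (2:ℂ) • (T * T) := by
          rw [Matrix.mul_smul, mul_one, Matrix.smul_mul]
      _ = (2:ℂ) • M := by rw [hTT]
  have hXΦherm : Φᴴ * Xᴴ = X * Φ := by
    rw [← Matrix.conjTranspose_mul, hXΦ]
  have hBΦ : Φᴴ * B * Φ = B := by
    have : B * Φ = Φ * B := hΦB.symm
    rw [mul_assoc, this, ← mul_assoc, hΦHΦ, one_mul]
  have hIkey : Complex.I * -Complex.I = 1 := by simp [Complex.I_mul_I]
  have hIkey' : -Complex.I * Complex.I = 1 := by simp [Complex.I_mul_I]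
  have hKN₁ : K₁ᴴ * K₁ = N := by
    rw [hK₁def, Matrix.conjTranspose_mul, hTh]
    have h0 : F₁ᴴ * T * (T * F₁) = F₁ᴴ * M * F₁ := by
      rw [← hTT]; noncomm_ring
    rw [h0, hF₁H, hF₁def, hMdef, Matrix.fromBlocks_multiply, Matrix.fromBlocks_multiply, hNdef]
    simp only [Matrix.one_mul, Matrix.mul_one, Matrix.zero_mul, Matrix.mul_zero, add_zero,
      zero_add, Matrix.smul_mul, Matrix.mul_smul, smul_zero]
    congr 1
    rw [Matrix.add_mul, Matrix.smul_mul, hBΦ, hXΦherm, smul_add, smul_smul, hIkey, one_smul,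
      neg_smul]
    abel
  have hKN₂ : K₂ᴴ * K₂ = N := by
    rw [hK₂def, Matrix.conjTranspose_mul, hTh]
    have h0 : F₂ᴴ * T * (T * F₂) = F₂ᴴ * M * F₂ := by
      rw [← hTT]; noncomm_ring
    rw [h0, hF₂H, hF₂def, hMdef, Matrix.fromBlocks_multiply, Matrix.fromBlocks_multiply, hNdef]
    simp only [Matrix.one_mul, Matrix.mul_one, Matrix.zero_mul, Matrix.mul_zero, add_zero,
      zero_add, Matrix.smul_mul, Matrix.mul_smul, smul_zero]
    congr 1
    rw [Matrix.add_mul, Matrix.smul_mul, hBΦ, hXΦherm, smul_add, smul_smul, hIkey', one_smul,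
      neg_smul]
    abel
  obtain ⟨U₁, hU₁, hP₁⟩ := polar_similarity K₁
  obtain ⟨U₂, hU₂, hP₂⟩ := polar_similarity K₂
  rw [hKN₁] at hP₁
  rw [hKN₂] at hP₂
  have hMrep : M = (2⁻¹ : ℂ) • (U₁ * N * star U₁) + (2⁻¹ : ℂ) • (U₂ * N * star U₂) := by
    rw [← hP₁, ← hP₂, ← smul_add, hsum, smul_smul]
    norm_num
  have habs : ‖(2⁻¹ : ℂ)‖ = 2⁻¹ := by
    rw [norm_inv, Complex.norm_two]
  have hf1 : f (U₁ * N * star U₁) = f N := by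
    have := hf_inv N ⟨U₁, hU₁⟩ ⟨star U₁, Unitary.star_mem hU₁⟩
    exact this
  have hf2 : f (U₂ * N * star U₂) = f N := by
    have := hf_inv N ⟨U₂, hU₂⟩ ⟨star U₂, Unitary.star_mem hU₂⟩
    exact this
  calc f M = f ((2⁻¹ : ℂ) • (U₁ * N * star U₁) + (2⁻¹ : ℂ) • (U₂ * N * star U₂)) := by
        rw [← hMrep]
    _ ≤ f ((2⁻¹ : ℂ) • (U₁ * N * star U₁)) + f ((2⁻¹ : ℂ) • (U₂ * N * star U₂)) := hf_add _ _
    _ = 2⁻¹ * f (U₁ * N * star U₁) + 2⁻¹ * f (U₂ * N * star U₂) := by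
        rw [hf_smul, hf_smul, habs]
    _ = f N := by rw [hf1, hf2]; ring
end
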